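/- arXiv:1711.05188 — 5 statements merged into one kernel-verified Lean document; each statement's English description precedes it below -/
import Mathlib

section
/- Let p ≥ 2 be an integer and (b_j)_{j≥1} a sequence of real numbers with Σ_{j≥1} b_j² < ∞, and let W be the limit in L²(Ω;H) of the partial sums Σ_{j=1}^n b_j ξ_j e_j. Then E[‖W‖^p] ≤ μ_p (Σ_{j≥1} b_j²)^{p/2}. -/
noncomputable section
open MeasureTheory ProbabilityTheory Real Filter
open scoped InnerProductSpace RealInnerProductSpace NNReal

variable {H : Type*} [NormedAddCommGroup H] [InnerProductSpace ℝ H]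

/-- The fractional power operator `L^{-β}`, defined spectrally via the
orthonormal eigenbasis `e` and eigenvalues `lam`. -/
def fracPow (lam : ℕ → ℝ) (β : ℝ) (e : ℕ → H) (x : H) : H :=
  ∑' j, (lam j ^ (-β) * ⟪x, e j⟫) • e j

/-- The `Ḣ^θ`-norm `‖g‖_θ`. -/
def dotNorm (lam : ℕ → ℝ) (θ : ℝ) (e : ℕ → H) (g : H) : ℝ :=
  Real.sqrt (∑' j, lam j ^ θ * ⟪g, e j⟫ ^ 2)

/-- Membership in `Ḣ^θ`. -/
def memDot (lam : ℕ → ℝ) (θ : ℝ) (e : ℕ → H) (g : H) : Prop :=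
  Summable fun j => lam j ^ θ * ⟪g, e j⟫ ^ 2

/-- The orthogonal projection `Π_h` onto `V_h = span (eh 0, …, eh (N-1))`. -/
def projh (N : ℕ) (eh : ℕ → H) (x : H) : H :=
  ∑ j ∈ Finset.range N, ⟪x, eh j⟫ • eh j

/-- The discrete operator `L_h^{-β} Π_h`. -/
def fracPowh (N : ℕ) (lamh : ℕ → ℝ) (β : ℝ) (eh : ℕ → H) (x : H) : H :=
  ∑ j ∈ Finset.range N, (lamh j ^ (-β) * ⟪x, eh j⟫) • eh j

/-- Number of quadrature nodes to the left: `K⁻ = ⌈π²/(4βk²)⌉`. -/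
def Kminus (β k : ℝ) : ℕ := ⌈π ^ 2 / (4 * β * k ^ 2)⌉₊

/-- Number of quadrature nodes to the right: `K⁺ = ⌈π²/(4(1-β)k²)⌉`. -/
def Kplus (β k : ℝ) : ℕ := ⌈π ^ 2 / (4 * (1 - β) * k ^ 2)⌉₊

/-- Scalar action of the sinc quadrature operator `Q_{h,k}^β` on an eigenvector
with eigenvalue `μ`. -/
def quadCoeff (β k μ : ℝ) : ℝ :=
  2 * k * Real.sin (π * β) / π *
    ∑ ℓ ∈ Finset.Icc (-(Kminus β k : ℤ)) (Kplus β k : ℤ),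
      Real.exp (2 * β * (ℓ : ℝ) * k) / (1 + Real.exp (2 * (ℓ : ℝ) * k) * μ)

/-- The quadrature operator composed with the projection: `Q_{h,k}^β Π_h`. -/
def quadOp (N : ℕ) (lamh : ℕ → ℝ) (β k : ℝ) (eh : ℕ → H) (x : H) : H :=
  ∑ j ∈ Finset.range N, (quadCoeff β k (lamh j) * ⟪x, eh j⟫) • eh j

/-- The semigroup `S(t)` generated by `-L`. -/
def semiGp (lam : ℕ → ℝ) (e : ℕ → H) (t : ℝ) (x : H) : H :=
  ∑' j, (Real.exp (-(lam j) * t) * ⟪x, e j⟫) • e j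

/-- The discrete semigroup composed with the projection: `S_h(t) Π_h`. -/
def semiGph (N : ℕ) (lamh : ℕ → ℝ) (eh : ℕ → H) (t : ℝ) (x : H) : H :=
  ∑ j ∈ Finset.range N, (Real.exp (-(lamh j) * t) * ⟪x, eh j⟫) • eh j

/-- `f_{α,β}(h) = h^{d(αβ-1)}` if `αβ ≠ 1`, and `|ln h|` if `αβ = 1`. -/
def fab (α β : ℝ) (d : ℕ) (h : ℝ) : ℝ :=
  if α * β = 1 then |Real.log h| else h ^ ((d : ℝ) * (α * β - 1))

/-- The `p`-th absolute moment `μ_p` of the standard normal distribution. -/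
def stdMoment (p : ℕ) : ℝ := ∫ x, |x| ^ p ∂(gaussianReal 0 1)

open scoped ENNReal
lemma aux_pow_le_exp (p : ℕ) (x : ℝ) :
    |x| ^ p ≤ (4 ^ p * p.factorial + 1) * Real.exp (x ^ 2 / 4) := by
  have hfac : (0:ℝ) < 4 ^ p * p.factorial := by positivity
  have hexp1 : (1:ℝ) ≤ Real.exp (x ^ 2 / 4) := Real.one_le_exp (by positivity)
  rcases le_or_gt |x| 1 with h | h
  · have h1 : |x| ^ p ≤ 1 := pow_le_one₀ (abs_nonneg x) h
    nlinarith
  · have key : (x ^ 2 / 4) ^ p ≤ p.factorial * Real.exp (x ^ 2 / 4) := by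
      have h1 : (x ^ 2 / 4) ^ p / p.factorial ≤ Real.exp (x ^ 2 / 4) := by
        calc (x ^ 2 / 4) ^ p / p.factorial
            ≤ ∑ i ∈ Finset.range (p + 1), (x ^ 2 / 4) ^ i / i.factorial :=
              Finset.single_le_sum (f := fun i => (x ^ 2 / 4) ^ i / i.factorial)
                (fun i _ => by positivity) (Finset.self_mem_range_succ p)
          _ ≤ Real.exp (x ^ 2 / 4) := Real.sum_le_exp_of_nonneg (by positivity) _
      have hf : (0:ℝ) < p.factorial := by positivity
      have := mul_le_mul_of_nonneg_right h1 hf.le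
      rw [div_mul_cancel₀ _ hf.ne'] at this
      linarith [this, mul_comm (Real.exp (x ^ 2 / 4)) (p.factorial:ℝ)]
    have h2 : |x| ^ p ≤ (x ^ 2 / 4) ^ p * 4 ^ p := by
      have hx2 : |x| ≤ x ^ 2 := by nlinarith [abs_nonneg x, sq_abs x]
      have : (x ^ 2 / 4 : ℝ) ^ p * 4 ^ p = (x ^ 2) ^ p := by
        rw [← mul_pow]; norm_num
      rw [this]
      exact pow_le_pow_left₀ (abs_nonneg x) hx2 p
    calc |x| ^ p ≤ (x ^ 2 / 4) ^ p * 4 ^ p := h2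
      _ ≤ (p.factorial * Real.exp (x ^ 2 / 4)) * 4 ^ p :=
          mul_le_mul_of_nonneg_right key (by positivity)
      _ ≤ (4 ^ p * p.factorial + 1) * Real.exp (x ^ 2 / 4) := by
          nlinarith [Real.exp_pos (x ^ 2 / 4)]

lemma integrable_abs_pow_gaussian (p : ℕ) :
    Integrable (fun x => |x| ^ p) (gaussianReal 0 1) := by
  rw [gaussianReal_of_var_ne_zero 0 one_ne_zero,
    integrable_withDensity_iff (measurable_gaussianPDF 0 1)
      (ae_of_all _ fun x => ENNReal.ofReal_lt_top)]
  have hpdf : ∀ x : ℝ, (gaussianPDF 0 1 x).toReal = (Real.sqrt (2 * π))⁻¹ *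
      Real.exp (-x ^ 2 / 2) := by
    intro x
    rw [gaussianPDF, ENNReal.toReal_ofReal (gaussianPDFReal_nonneg 0 1 x)]
    simp [gaussianPDFReal]
  set C : ℝ := (4 ^ p * p.factorial + 1 : ℝ) with hC
  have hC0 : 0 < C := by positivity
  apply Integrable.mono'
    (g := fun x => C * (Real.sqrt (2 * π))⁻¹ * Real.exp (-(1/4) * x ^ 2))
  · exact ((integrable_exp_neg_mul_sq (by norm_num : (0:ℝ) < 1/4)).const_mul _)
  · exact ((measurable_abs.pow_const p).mul
      (measurable_gaussianPDF 0 1).ennreal_toReal).aestronglyMeasurable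
  · refine ae_of_all _ fun x => ?_
    rw [Real.norm_eq_abs, abs_of_nonneg (by positivity), hpdf x]
    have h1 := aux_pow_le_exp p x
    have hsqrt : (0:ℝ) ≤ (Real.sqrt (2 * π))⁻¹ := by positivity
    have h2 : Real.exp (x ^ 2 / 4) * Real.exp (-x ^ 2 / 2) = Real.exp (-(1/4) * x ^ 2) := by
      rw [← Real.exp_add]; ring_nf
    calc |x| ^ p * ((Real.sqrt (2 * π))⁻¹ * Real.exp (-x ^ 2 / 2))
        = (Real.sqrt (2 * π))⁻¹ * (|x| ^ p * Real.exp (-x ^ 2 / 2)) := by ring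
      _ ≤ (Real.sqrt (2 * π))⁻¹ * ((C * Real.exp (x ^ 2 / 4)) * Real.exp (-x ^ 2 / 2)) := by
          apply mul_le_mul_of_nonneg_left _ hsqrt
          exact mul_le_mul_of_nonneg_right h1 (Real.exp_pos _).le
      _ = C * (Real.sqrt (2 * π))⁻¹ * Real.exp (-(1/4) * x ^ 2) := by
          rw [mul_assoc, h2]; ring

lemma sq_rpow_half_pow {a : ℝ} (ha : 0 ≤ a) (p : ℕ) :
    (a ^ 2) ^ ((p : ℝ) / 2) = a ^ p := by
  rw [← Real.rpow_natCast a 2, ← Real.rpow_natCast a p, ← Real.rpow_mul ha]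
  congr 1
  push_cast
  ring

lemma stdMoment_nonneg (p : ℕ) : 0 ≤ stdMoment p :=
  integral_nonneg fun x => by positivity

lemma lintegral_abs_pow_gaussian (p : ℕ) :
    ∫⁻ x, ENNReal.ofReal (|x| ^ p) ∂(gaussianReal 0 1) = ENNReal.ofReal (stdMoment p) :=
  (ofReal_integral_eq_lintegral_ofReal (integrable_abs_pow_gaussian p)
    (ae_of_all _ fun x => by positivity)).symm

lemma finite_bound {Ω : Type*} [MeasurableSpace Ω] (P : Measure Ω) [IsProbabilityMeasure P]
    (ξ : ℕ → Ω → ℝ) (hξmeas : ∀ j, Measurable (ξ j))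
    (hξgauss : ∀ j, Measure.map (ξ j) P = gaussianReal 0 1)
    (p : ℕ) (hp : 2 ≤ p) (b : ℕ → ℝ) (hb : Summable fun j => b j ^ 2) (n : ℕ) :
    ∫⁻ ω, ENNReal.ofReal ((∑ j ∈ Finset.range n, (b j * ξ j ω) ^ 2) ^ ((p : ℝ) / 2)) ∂P
      ≤ ENNReal.ofReal (stdMoment p * (∑' j, b j ^ 2) ^ ((p : ℝ) / 2)) := by
  have hp2 : (2:ℝ) ≤ (p:ℝ) := by exact_mod_cast hp
  set q : ℝ := (p : ℝ) / 2 with hqdef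
  have hq1 : 1 ≤ q := by rw [hqdef]; linarith
  have hq0 : 0 < q := by linarith
  set r : ℝ≥0∞ := ENNReal.ofReal q with hrdef
  have hr0 : r ≠ 0 := by
    simp [hrdef, ENNReal.ofReal_eq_zero, not_le, hq0]
  have hrt : r ≠ ⊤ := ENNReal.ofReal_ne_top
  have hrtoReal : r.toReal = q := ENNReal.toReal_ofReal hq0.le
  have hr1 : 1 ≤ r := by rw [hrdef]; exact ENNReal.one_le_ofReal.mpr hq1
  set g : ℕ → Ω → ℝ := fun j ω => (b j * ξ j ω) ^ 2 with hgdef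
  have hgmeas : ∀ j, Measurable (g j) := fun j =>
    ((hξmeas j).const_mul (b j)).pow_const 2
  set T : ℝ := ∑' j, b j ^ 2 with hT
  have hT0 : 0 ≤ T := tsum_nonneg fun j => sq_nonneg _
  have hμnn : 0 ≤ stdMoment p := stdMoment_nonneg p
  -- eLpNorm of each g j
  have key_j : ∀ j, eLpNorm (g j) r P = ENNReal.ofReal (b j ^ 2 * stdMoment p ^ (1 / q)) := by
    intro j
    rw [eLpNorm_eq_lintegral_rpow_enorm_toReal hr0 hrt, hrtoReal]
    have hpt : ∀ ω, ‖g j ω‖ₑ ^ q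
        = ENNReal.ofReal (|b j| ^ p) * ENNReal.ofReal (|ξ j ω| ^ p) := by
      intro ω
      rw [Real.enorm_eq_ofReal (by positivity),
        ENNReal.ofReal_rpow_of_nonneg (by positivity) hq0.le,
        ← ENNReal.ofReal_mul (by positivity)]
      congr 1
      have : g j ω = (|b j| * |ξ j ω|) ^ 2 := by
        rw [hgdef]; rw [← abs_mul, sq_abs]
      rw [this, sq_rpow_half_pow (by positivity) p, mul_pow]
    simp only [hpt]
    rw [lintegral_const_mul _ (by
      exact ENNReal.measurable_ofReal.comp ((measurable_abs.comp (hξmeas j)).pow_const p))]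
    have hmap : ∫⁻ ω, ENNReal.ofReal (|ξ j ω| ^ p) ∂P = ENNReal.ofReal (stdMoment p) := by
      have h1 : ∫⁻ x, ENNReal.ofReal (|x| ^ p) ∂(Measure.map (ξ j) P)
          = ∫⁻ ω, ENNReal.ofReal (|ξ j ω| ^ p) ∂P :=
        lintegral_map (ENNReal.measurable_ofReal.comp (measurable_abs.pow_const p)) (hξmeas j)
      rw [← h1, hξgauss j, lintegral_abs_pow_gaussian]
    rw [hmap, ← ENNReal.ofReal_mul (by positivity),
      ENNReal.ofReal_rpow_of_nonneg (by positivity) (by positivity),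
      Real.mul_rpow (by positivity) hμnn]
    congr 2
    rw [← Real.rpow_natCast |b j| p, ← Real.rpow_mul (abs_nonneg _)]
    rw [show (p : ℝ) * (1 / q) = 2 by field_simp [hqdef]; linarith [hqdef]]
    rw [show ((2:ℝ)) = ((2:ℕ):ℝ) by norm_num, Real.rpow_natCast, sq_abs]
  -- lhs as eLpNorm of the sum
  have hsum_eq : ∫⁻ ω, ENNReal.ofReal ((∑ j ∈ Finset.range n, g j ω) ^ q) ∂P
      = eLpNorm (∑ j ∈ Finset.range n, g j) r P ^ q := by
    rw [eLpNorm_eq_lintegral_rpow_enorm_toReal hr0 hrt, hrtoReal, ← ENNReal.rpow_mul, one_div,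
      inv_mul_cancel₀ (by positivity : q ≠ 0), ENNReal.rpow_one]
    refine lintegral_congr fun ω => ?_
    have hF : (∑ j ∈ Finset.range n, g j) ω = ∑ j ∈ Finset.range n, g j ω :=
      Finset.sum_apply ω _ g
    rw [hF, Real.enorm_eq_ofReal (Finset.sum_nonneg fun j _ => sq_nonneg _),
      ENNReal.ofReal_rpow_of_nonneg (Finset.sum_nonneg fun j _ => sq_nonneg _) hq0.le]
  calc ∫⁻ ω, ENNReal.ofReal ((∑ j ∈ Finset.range n, (b j * ξ j ω) ^ 2) ^ q) ∂P
      = eLpNorm (∑ j ∈ Finset.range n, g j) r P ^ q := hsum_eq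
    _ ≤ (∑ j ∈ Finset.range n, eLpNorm (g j) r P) ^ q := by
        apply ENNReal.rpow_le_rpow _ hq0.le
        exact eLpNorm_sum_le (fun j _ => (hgmeas j).aestronglyMeasurable) hr1
    _ ≤ ENNReal.ofReal (T * stdMoment p ^ (1 / q)) ^ q := by
        apply ENNReal.rpow_le_rpow _ hq0.le
        simp only [key_j]
        rw [← ENNReal.ofReal_sum_of_nonneg (fun j _ => by positivity), ← Finset.sum_mul]
        apply ENNReal.ofReal_le_ofReal
        apply mul_le_mul_of_nonneg_right _ (by positivity)
        exact Summable.sum_le_tsum _ (fun j _ => sq_nonneg _) hb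
    _ = ENNReal.ofReal (stdMoment p * T ^ q) := by
        rw [ENNReal.ofReal_rpow_of_nonneg (by positivity) hq0.le]
        congr 1
        rw [Real.mul_rpow hT0 (by positivity), ← Real.rpow_mul hμnn,
          one_div, inv_mul_cancel₀ (by positivity : q ≠ 0), Real.rpow_one, mul_comm]

/-- If `W` is the `L²(Ω;H)`-limit of `Σ_{j<n} b_j ξ_j e_j` with
`Σ b_j² < ∞`, then `E[‖W‖^p] ≤ μ_p (Σ b_j²)^{p/2}`. -/
theorem stmt5
    {H : Type*} [NormedAddCommGroup H] [InnerProductSpace ℝ H] [CompleteSpace H]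
    {Ω : Type*} [MeasurableSpace Ω] (P : Measure Ω) [IsProbabilityMeasure P]
    (e : ℕ → H) (he : Orthonormal ℝ e)
    (hbasis : (Submodule.span ℝ (Set.range e)).topologicalClosure = ⊤)
    (ξ : ℕ → Ω → ℝ) (hξmeas : ∀ j, Measurable (ξ j))
    (hξindep : iIndepFun ξ P)
    (hξgauss : ∀ j, Measure.map (ξ j) P = gaussianReal 0 1)
    (p : ℕ) (hp : 2 ≤ p)
    (b : ℕ → ℝ) (hb : Summable fun j => b j ^ 2)
    (W : Ω → H) (hWmeas : AEStronglyMeasurable W P)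
    (hW : Tendsto
      (fun n => ∫ ω, ‖W ω - ∑ j ∈ Finset.range n, (b j * ξ j ω) • e j‖ ^ 2 ∂P)
      atTop (nhds 0)) :
    (∫ ω, ‖W ω‖ ^ p ∂P) ≤ stdMoment p * (∑' j, b j ^ 2) ^ ((p : ℝ) / 2) := by

  have hp2 : (2:ℝ) ≤ (p:ℝ) := by exact_mod_cast hp
  have hq0 : 0 < (p : ℝ) / 2 := by linarith
  have hT0 : 0 ≤ ∑' j, b j ^ 2 := tsum_nonneg fun j => sq_nonneg _
  have hμnn := stdMoment_nonneg p
  have hRHS : 0 ≤ stdMoment p * (∑' j, b j ^ 2) ^ ((p : ℝ) / 2) := by positivity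
  by_cases hint : Integrable (fun ω => ‖W ω‖ ^ p) P
  swap
  · rw [integral_undef hint]; exact hRHS
  set S : ℕ → Ω → H := fun n ω => ∑ j ∈ Finset.range n, (b j * ξ j ω) • e j with hSdef
  have hSnorm : ∀ n ω, ‖S n ω‖ ^ 2 = ∑ j ∈ Finset.range n, (b j * ξ j ω) ^ 2 := by
    intro n ω
    have h1 : (⟪S n ω, S n ω⟫_ℝ) = ∑ j ∈ Finset.range n, (b j * ξ j ω) * (b j * ξ j ω) := by
      simpa using he.inner_sum (fun j => b j * ξ j ω) (fun j => b j * ξ j ω) (Finset.range n)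
    rw [← real_inner_self_eq_norm_sq, h1]
    exact Finset.sum_congr rfl fun j _ => (sq _).symm
  have hSmeas : ∀ n, AEStronglyMeasurable (S n) P := by
    intro n
    have h1 : ∀ j : ℕ, StronglyMeasurable (fun ω => (b j * ξ j ω) • e j : Ω → H) :=
      fun j => ((hξmeas j).const_mul (b j)).stronglyMeasurable.smul_const (e j)
    exact (Finset.stronglyMeasurable_fun_sum (Finset.range n) fun j _ => h1 j).aestronglyMeasurable
  have hnormp : ∀ n ω, ‖S n ω‖ ^ p
      = (∑ j ∈ Finset.range n, (b j * ξ j ω) ^ 2) ^ ((p : ℝ) / 2) := by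
    intro n ω
    rw [← hSnorm n ω, sq_rpow_half_pow (norm_nonneg _)]
  -- integrability facts
  have hW2 : Integrable (fun ω => ‖W ω‖ ^ 2) P := by
    refine Integrable.mono' ((integrable_const (1:ℝ)).add hint)
      ((hWmeas.norm.aemeasurable.pow_const 2).aestronglyMeasurable)
      (ae_of_all _ fun ω => ?_)
    simp only [Pi.add_apply]
    rw [Real.norm_eq_abs, abs_of_nonneg (by positivity)]
    rcases le_or_gt ‖W ω‖ 1 with h | h
    · have h1 : ‖W ω‖ ^ 2 ≤ 1 := pow_le_one₀ (norm_nonneg _) h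
      have h2 : (0:ℝ) ≤ ‖W ω‖ ^ p := by positivity
      linarith
    · have h1 : ‖W ω‖ ^ 2 ≤ ‖W ω‖ ^ p := pow_le_pow_right₀ h.le hp
      linarith
  have hξ2 : ∀ j, Integrable (fun ω => ξ j ω ^ 2) P := by
    intro j
    have h1 : Integrable (fun x : ℝ => x ^ 2) (Measure.map (ξ j) P) := by
      rw [hξgauss j]
      simpa [sq_abs] using integrable_abs_pow_gaussian 2
    exact (integrable_map_measure ((measurable_id.pow_const 2).aestronglyMeasurable)
      (hξmeas j).aemeasurable).mp h1
  have hS2 : ∀ n, Integrable (fun ω => ‖S n ω‖ ^ 2) P := by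
    intro n
    simp only [hSnorm]
    refine integrable_finset_sum _ fun j _ => ?_
    have h1 : (fun ω => (b j * ξ j ω) ^ 2) = fun ω => (b j) ^ 2 * ξ j ω ^ 2 :=
      funext fun ω => by ring
    rw [h1]
    exact (hξ2 j).const_mul _
  have hdiff : ∀ n, Integrable (fun ω => ‖W ω - S n ω‖ ^ 2) P := by
    intro n
    refine Integrable.mono' ((hW2.const_mul 2).add ((hS2 n).const_mul 2))
      (((hWmeas.sub (hSmeas n)).norm.aemeasurable.pow_const 2).aestronglyMeasurable)
      (ae_of_all _ fun ω => ?_)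
    simp only [Pi.add_apply]
    rw [Real.norm_eq_abs, abs_of_nonneg (by positivity)]
    have h1 := norm_sub_le (W ω) (S n ω)
    have h2 := norm_nonneg (W ω)
    have h3 := norm_nonneg (S n ω)
    have h4 := norm_nonneg (W ω - S n ω)
    nlinarith [mul_self_le_mul_self h4 h1, sq_nonneg (‖W ω‖ - ‖S n ω‖)]
  -- choose a subsequence along which the L² error is summable
  have hchoice : ∀ k : ℕ, ∃ n, ∫ ω, ‖W ω - S n ω‖ ^ 2 ∂P < (1/2 : ℝ) ^ k := by
    intro k
    exact (hW.eventually (gt_mem_nhds (by positivity : (0:ℝ) < (1/2) ^ k))).exists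
  choose φ hφ using hchoice
  have hdm : ∀ k, AEMeasurable (fun ω => ENNReal.ofReal (‖W ω - S (φ k) ω‖ ^ 2)) P := fun k =>
    ENNReal.measurable_ofReal.comp_aemeasurable
      ((hWmeas.sub (hSmeas (φ k))).norm.aemeasurable.pow_const 2)
  have haecv : ∀ᵐ ω ∂P, Tendsto (fun k => S (φ k) ω) atTop (nhds (W ω)) := by
    have hsum : ∫⁻ ω, ∑' k, ENNReal.ofReal (‖W ω - S (φ k) ω‖ ^ 2) ∂P ≠ ⊤ := by
      rw [lintegral_tsum hdm]
      have hle : ∀ k, ∫⁻ ω, ENNReal.ofReal (‖W ω - S (φ k) ω‖ ^ 2) ∂P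
          ≤ ENNReal.ofReal ((1/2 : ℝ) ^ k) := by
        intro k
        rw [← ofReal_integral_eq_lintegral_ofReal (hdiff (φ k))
          (ae_of_all _ fun ω => by positivity)]
        exact ENNReal.ofReal_le_ofReal (hφ k).le
      refine ne_top_of_le_ne_top ?_ (ENNReal.tsum_le_tsum hle)
      rw [← ENNReal.ofReal_tsum_of_nonneg (fun k => by positivity)
        (summable_geometric_of_lt_one (by norm_num) (by norm_num))]
      exact ENNReal.ofReal_ne_top
    filter_upwards [ae_lt_top' (AEMeasurable.ennreal_tsum hdm) hsum] with ω hω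
    have h0 : Tendsto (fun k => ENNReal.ofReal (‖W ω - S (φ k) ω‖ ^ 2)) atTop (nhds 0) :=
      ENNReal.tendsto_atTop_zero_of_tsum_ne_top hω.ne
    have h1 : Tendsto (fun k => ‖W ω - S (φ k) ω‖ ^ 2) atTop (nhds 0) := by
      have h2 := (ENNReal.tendsto_toReal (by simp : (0:ℝ≥0∞) ≠ ⊤)).comp h0
      have h3 : (fun k => (ENNReal.ofReal (‖W ω - S (φ k) ω‖ ^ 2)).toReal)
          = fun k => ‖W ω - S (φ k) ω‖ ^ 2 :=
        funext fun k => ENNReal.toReal_ofReal (by positivity)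
      simp only [Function.comp_def] at h2
      rw [h3] at h2
      simpa using h2
    have h4 : Tendsto (fun k => ‖W ω - S (φ k) ω‖) atTop (nhds 0) := by
      have h5 := (Real.continuous_sqrt.tendsto 0).comp h1
      have h6 : (fun k => Real.sqrt (‖W ω - S (φ k) ω‖ ^ 2))
          = fun k => ‖W ω - S (φ k) ω‖ :=
        funext fun k => Real.sqrt_sq (norm_nonneg _)
      simp only [Function.comp_def] at h5
      rw [h6] at h5
      simpa using h5
    rw [tendsto_iff_norm_sub_tendsto_zero]
    simpa [norm_sub_rev] using h4
  -- measurability of approximations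
  have hmeasS : ∀ k, Measurable (fun ω =>
      ENNReal.ofReal ((∑ j ∈ Finset.range (φ k), (b j * ξ j ω) ^ 2) ^ ((p : ℝ) / 2))) := by
    intro k
    apply ENNReal.measurable_ofReal.comp
    exact (Finset.measurable_sum _ fun j _ =>
      ((hξmeas j).const_mul (b j)).pow_const 2).pow measurable_const
  -- Fatou argument
  have hlin : ∫⁻ ω, ENNReal.ofReal (‖W ω‖ ^ p) ∂P
      ≤ ENNReal.ofReal (stdMoment p * (∑' j, b j ^ 2) ^ ((p : ℝ) / 2)) := by
    have hcongr : ∫⁻ ω, ENNReal.ofReal (‖W ω‖ ^ p) ∂P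
        = ∫⁻ ω, liminf (fun k => ENNReal.ofReal (‖S (φ k) ω‖ ^ p)) atTop ∂P := by
      refine lintegral_congr_ae ?_
      filter_upwards [haecv] with ω hω
      have hc : Continuous fun x : H => ENNReal.ofReal (‖x‖ ^ p) :=
        ENNReal.continuous_ofReal.comp ((continuous_pow p).comp continuous_norm)
      exact (((hc.tendsto (W ω)).comp hω).liminf_eq).symm
    rw [hcongr]
    simp only [hnormp]
    calc ∫⁻ ω, liminf (fun k => ENNReal.ofReal
          ((∑ j ∈ Finset.range (φ k), (b j * ξ j ω) ^ 2) ^ ((p : ℝ) / 2))) atTop ∂P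
        ≤ liminf (fun k => ∫⁻ ω, ENNReal.ofReal
          ((∑ j ∈ Finset.range (φ k), (b j * ξ j ω) ^ 2) ^ ((p : ℝ) / 2)) ∂P) atTop :=
          lintegral_liminf_le hmeasS
      _ ≤ ENNReal.ofReal (stdMoment p * (∑' j, b j ^ 2) ^ ((p : ℝ) / 2)) := by
          refine le_trans (Filter.liminf_le_liminf (Eventually.of_forall fun k =>
            finite_bound P ξ hξmeas hξgauss p hp b hb (φ k))) ?_
          simp [Filter.liminf_const]
  rw [integral_eq_lintegral_of_nonneg_ae (ae_of_all _ fun ω => by positivity)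
    ((hWmeas.norm.aemeasurable.pow_const p).aestronglyMeasurable)]
  calc (∫⁻ ω, ENNReal.ofReal (‖W ω‖ ^ p) ∂P).toReal
      ≤ (ENNReal.ofReal (stdMoment p * (∑' j, b j ^ 2) ^ ((p : ℝ) / 2))).toReal :=
        ENNReal.toReal_mono ENNReal.ofReal_ne_top hlin
    _ = stdMoment p * (∑' j, b j ^ 2) ^ ((p : ℝ) / 2) := ENNReal.toReal_ofReal hRHS
end
end

section
/- Suppose Assumption (iv) holds, 2αβ > 1, and d ∈ ℕ. Set θ* := d(2αβ−1) − 2β; let θ > min{θ*, s−2β} if θ* ≥ 0, and set θ := 0 otherwise. Then there exists a constant C > 0, independent of h, such that ‖(L^{−β} − L_h^{−β}Π_h)g‖ ≤ C h^{min{d(2αβ−1), s}} ‖g‖_θ for all g ∈ Ḣ^θ and all h ∈ (0,h₀). -/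
noncomputable section
open MeasureTheory ProbabilityTheory Real Filter
open scoped InnerProductSpace RealInnerProductSpace NNReal

variable {H : Type*} [NormedAddCommGroup H] [InnerProductSpace ℝ H]

lemma baseInt {β l : ℝ} (hβ : 0 < β) (hl : 0 < l) :
    IntegrableOn (fun t : ℝ => t ^ (β - 1) * Real.exp (-(l * t))) (Set.Ioi 0) := by
  have := integrableOn_rpow_mul_exp_neg_mul_rpow (p := 1) (s := β - 1) (b := l)
    (by linarith) one_pos hl
  simpa [Real.rpow_one, neg_mul] using this

lemma baseVal {β l : ℝ} (hβ : 0 < β) (hl : 0 < l) :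
    ∫ t in Set.Ioi (0:ℝ), t ^ (β - 1) * Real.exp (-(l * t)) = l ^ (-β) * Real.Gamma β := by
  rw [Real.integral_rpow_mul_exp_neg_mul_Ioi hβ hl]
  congr 1
  rw [one_div, Real.inv_rpow hl.le, ← Real.rpow_neg hl.le]

lemma discRepr {H : Type*} [NormedAddCommGroup H] [InnerProductSpace ℝ H]
    (M : ℕ) (μ : ℕ → ℝ) (hμ : ∀ j, 0 < μ j) (f : ℕ → H) {β : ℝ} (hβ0 : 0 < β) (g y : H) :
    Real.Gamma β * ⟪fracPowh M μ β f g, y⟫ =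
      (∫ t in Set.Ioi (0:ℝ), t ^ (β - 1) * ⟪semiGph M μ f t g, y⟫) ∧
    IntegrableOn (fun t : ℝ => t ^ (β - 1) * ⟪semiGph M μ f t g, y⟫) (Set.Ioi 0) := by
  have hfun : (fun t : ℝ => t ^ (β - 1) * ⟪semiGph M μ f t g, y⟫) =
      fun t : ℝ => ∑ j ∈ Finset.range M,
        (t ^ (β - 1) * Real.exp (-(μ j * t))) * (⟪g, f j⟫ * ⟪f j, y⟫) := by
    funext t
    rw [semiGph, sum_inner, Finset.mul_sum]
    refine Finset.sum_congr rfl fun j _ => ?_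
    rw [real_inner_smul_left, neg_mul]
    ring
  constructor
  · rw [hfun, integral_finset_sum _ (fun j _ => ((baseInt hβ0 (hμ j)).mul_const _))]
    rw [fracPowh, sum_inner, Finset.mul_sum]
    refine Finset.sum_congr rfl fun j _ => ?_
    rw [MeasureTheory.integral_mul_const, baseVal hβ0 (hμ j), real_inner_smul_left]
    ring
  · rw [hfun]
    exact integrable_finset_sum _ (fun j _ => ((baseInt hβ0 (hμ j)).mul_const _))

lemma contRepr {H : Type*} [NormedAddCommGroup H] [InnerProductSpace ℝ H] [CompleteSpace H]
    (e : ℕ → H) (he : Orthonormal ℝ e) (lam : ℕ → ℝ) (hpos : ∀ j, 0 < lam j)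
    (hmono : Monotone lam) {β : ℝ} (hβ0 : 0 < β) (g y : H) :
    Real.Gamma β * ⟪fracPow lam β e g, y⟫ =
      (∫ t in Set.Ioi (0:ℝ), t ^ (β - 1) * ⟪semiGp lam e t g, y⟫) ∧
    IntegrableOn (fun t : ℝ => t ^ (β - 1) * ⟪semiGp lam e t g, y⟫) (Set.Ioi 0) := by
  have hlow : ∀ j, lam 0 ≤ lam j := fun j => hmono (Nat.zero_le j)
  have ha2 : Summable fun j => ⟪g, e j⟫ ^ 2 := by
    have := he.inner_products_summable g
    simpa [real_inner_comm, Real.norm_eq_abs, sq_abs] using this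
  have hb2 : Summable fun j => ⟪y, e j⟫ ^ 2 := by
    have := he.inner_products_summable y
    simpa [real_inner_comm, Real.norm_eq_abs, sq_abs] using this
  have hab : Summable fun j => |⟪g, e j⟫| * |⟪y, e j⟫| := by
    refine Summable.of_nonneg_of_le (fun j => by positivity) (fun j => ?_)
      ((ha2.add hb2).div_const 2)
    have h1 : 0 ≤ (|⟪g, e j⟫| - |⟪y, e j⟫|) ^ 2 := sq_nonneg _
    have h2 : |⟪g, e j⟫| ^ 2 = ⟪g, e j⟫ ^ 2 := sq_abs _
    have h3 : |⟪y, e j⟫| ^ 2 = ⟪y, e j⟫ ^ 2 := sq_abs _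
    nlinarith
  -- summability of vector series with square-summable coefficients
  have hvec : ∀ c : ℕ → ℝ, Summable (fun j => c j ^ 2) →
      Summable (fun j => c j • e j) := by
    intro c hc
    have := (he.orthogonalFamily.summable_iff_norm_sq_summable c).mpr
      (by simpa [Real.norm_eq_abs, sq_abs] using hc)
    simpa [LinearIsometry.toSpanSingleton_apply] using this
  have hinner : ∀ c : ℕ → ℝ, Summable (fun j => c j • e j) →
      ⟪(∑' j, c j • e j), y⟫ = ∑' j, c j * ⟪y, e j⟫ := by
    intro c hc
    rw [real_inner_comm]
    have := (innerSL ℝ y).map_tsum hc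
    simpa [real_inner_smul_right] using this
  -- fracPow inner expansion
  have hlb : ∀ j, lam j ^ (-β) ≤ lam 0 ^ (-β) := fun j =>
    Real.rpow_le_rpow_of_nonpos (hpos 0) (hlow j) (neg_nonpos.mpr hβ0.le)
  have hsumv1 : Summable fun j => (lam j ^ (-β) * ⟪g, e j⟫) • e j := by
    refine hvec _ (Summable.of_nonneg_of_le (fun j => sq_nonneg _) (fun j => ?_)
      (ha2.mul_left ((lam 0 ^ (-β)) ^ 2)))
    have h1 : (0:ℝ) < lam j ^ (-β) := Real.rpow_pos_of_pos (hpos j) _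
    have h2 := hlb j
    calc (lam j ^ (-β) * ⟪g, e j⟫) ^ 2 = (lam j ^ (-β)) ^ 2 * ⟪g, e j⟫ ^ 2 := by ring
      _ ≤ (lam 0 ^ (-β)) ^ 2 * ⟪g, e j⟫ ^ 2 :=
          mul_le_mul_of_nonneg_right (pow_le_pow_left₀ h1.le h2 2) (sq_nonneg _)
  have hfrac : ⟪fracPow lam β e g, y⟫ = ∑' j, (lam j ^ (-β) * ⟪g, e j⟫) * ⟪y, e j⟫ :=
    hinner _ hsumv1
  -- semiGp inner expansion for t > 0
  have hcb : ∀ t : ℝ, 0 < t →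
      Summable fun j => (Real.exp (-(lam j) * t) * ⟪g, e j⟫) * ⟪y, e j⟫ := by
    intro t ht
    refine Summable.of_nonneg_of_le (fun j => abs_nonneg _) (fun j => ?_) hab |>.of_abs
    rw [abs_mul, abs_mul]
    have hexp : Real.exp (-(lam j) * t) ≤ 1 := by
      rw [Real.exp_le_one_iff]
      have := (hpos j).le
      nlinarith
    have h1 : |Real.exp (-(lam j) * t)| ≤ 1 := by
      rw [abs_of_pos (Real.exp_pos _)]; exact hexp
    refine mul_le_mul_of_nonneg_right ?_ (abs_nonneg _)
    exact mul_le_of_le_one_left (abs_nonneg _) h1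
  have hsemi : ∀ t : ℝ, 0 < t → ⟪semiGp lam e t g, y⟫ =
      ∑' j, (Real.exp (-(lam j) * t) * ⟪g, e j⟫) * ⟪y, e j⟫ := by
    intro t ht
    refine hinner _ (hvec _ ?_)
    refine Summable.of_nonneg_of_le (fun j => sq_nonneg _) (fun j => ?_) ha2
    have hexp : Real.exp (-(lam j) * t) ≤ 1 := by
      rw [Real.exp_le_one_iff]
      have := (hpos j).le
      nlinarith
    calc (Real.exp (-(lam j) * t) * ⟪g, e j⟫) ^ 2
        = Real.exp (-(lam j) * t) ^ 2 * ⟪g, e j⟫ ^ 2 := by ring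
      _ ≤ 1 * ⟪g, e j⟫ ^ 2 := mul_le_mul_of_nonneg_right
          (pow_le_one₀ (Real.exp_pos _).le hexp) (sq_nonneg _)
      _ = ⟪g, e j⟫ ^ 2 := one_mul _
  -- per-term integrands
  have hΓ : (0:ℝ) < Real.Gamma β := Real.Gamma_pos_of_pos hβ0
  have hFint : ∀ j : ℕ, Integrable
      (fun t : ℝ => (t ^ (β - 1) * Real.exp (-(lam j * t))) * (⟪g, e j⟫ * ⟪y, e j⟫))
      (volume.restrict (Set.Ioi 0)) :=
    fun j => (baseInt hβ0 (hpos j)).mul_const _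
  have hFval : ∀ j : ℕ, (∫ t in Set.Ioi (0:ℝ),
      (t ^ (β - 1) * Real.exp (-(lam j * t))) * (⟪g, e j⟫ * ⟪y, e j⟫))
      = (lam j ^ (-β) * Real.Gamma β) * (⟪g, e j⟫ * ⟪y, e j⟫) := by
    intro j
    rw [MeasureTheory.integral_mul_const, baseVal hβ0 (hpos j)]
  have hFnorm : ∀ j : ℕ, (∫ t in Set.Ioi (0:ℝ),
      ‖(t ^ (β - 1) * Real.exp (-(lam j * t))) * (⟪g, e j⟫ * ⟪y, e j⟫)‖)
      = (lam j ^ (-β) * Real.Gamma β) * |⟪g, e j⟫ * ⟪y, e j⟫| := by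
    intro j
    calc (∫ t in Set.Ioi (0:ℝ), ‖(t ^ (β - 1) * Real.exp (-(lam j * t))) * (⟪g, e j⟫ * ⟪y, e j⟫)‖)
        = ∫ t in Set.Ioi (0:ℝ),
            (t ^ (β - 1) * Real.exp (-(lam j * t))) * |⟪g, e j⟫ * ⟪y, e j⟫| := by
          refine setIntegral_congr_fun measurableSet_Ioi (fun t ht => ?_)
          have ht' : (0:ℝ) < t := ht
          rw [Real.norm_eq_abs, abs_mul]
          congr 1
          exact abs_of_nonneg (mul_nonneg (Real.rpow_nonneg ht'.le _) (Real.exp_pos _).le)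
      _ = _ := by rw [MeasureTheory.integral_mul_const, baseVal hβ0 (hpos j)]
  have hFsum : Summable fun j => ∫ t in Set.Ioi (0:ℝ),
      ‖(t ^ (β - 1) * Real.exp (-(lam j * t))) * (⟪g, e j⟫ * ⟪y, e j⟫)‖ := by
    have h1 : Summable fun j => (lam j ^ (-β) * Real.Gamma β) * |⟪g, e j⟫ * ⟪y, e j⟫| := by
      refine Summable.of_nonneg_of_le
        (fun j => mul_nonneg (mul_nonneg (Real.rpow_pos_of_pos (hpos j) _).le hΓ.le)
          (abs_nonneg _)) (fun j => ?_)
        (hab.mul_left (lam 0 ^ (-β) * Real.Gamma β))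
      rw [abs_mul]
      exact mul_le_mul_of_nonneg_right
        (mul_le_mul_of_nonneg_right (hlb j) hΓ.le) (mul_nonneg (abs_nonneg _) (abs_nonneg _))
    exact h1.congr (fun j => (hFnorm j).symm)
  have hswap := MeasureTheory.integral_tsum_of_summable_integral_norm hFint hFsum
  -- pointwise identification on Ioi 0
  have hptwise : ∀ t ∈ Set.Ioi (0:ℝ),
      (∑' j, (t ^ (β - 1) * Real.exp (-(lam j * t))) * (⟪g, e j⟫ * ⟪y, e j⟫))
        = t ^ (β - 1) * ⟪semiGp lam e t g, y⟫ := by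
    intro t ht
    have ht' : (0:ℝ) < t := ht
    rw [hsemi t ht', ← tsum_mul_left]
    refine tsum_congr fun j => ?_
    have hexp : -(lam j * t) = -(lam j) * t := (neg_mul _ _).symm
    rw [hexp]; ring
  -- measurability of the integrand
  have hmeas : AEStronglyMeasurable (fun t : ℝ => t ^ (β - 1) * ⟪semiGp lam e t g, y⟫)
      (volume.restrict (Set.Ioi 0)) := by
    refine aestronglyMeasurable_of_tendsto_ae (u := atTop)
      (f := fun (n : ℕ) (t : ℝ) => ∑ j ∈ Finset.range n,
        (t ^ (β - 1) * Real.exp (-(lam j * t))) * (⟪g, e j⟫ * ⟪y, e j⟫))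
      (fun n => Measurable.aestronglyMeasurable (by fun_prop)) ?_
    filter_upwards [ae_restrict_mem measurableSet_Ioi] with t ht
    have ht' : (0:ℝ) < t := ht
    have hs1 : HasSum (fun j => (t ^ (β - 1) * Real.exp (-(lam j * t))) * (⟪g, e j⟫ * ⟪y, e j⟫))
        (t ^ (β - 1) * ⟪semiGp lam e t g, y⟫) := by
      rw [hsemi t ht']
      have h2 := (hcb t ht').hasSum.mul_left (t ^ (β - 1))
      convert h2 using 1
      · rfl
      funext j
      have hexp : -(lam j * t) = -(lam j) * t := (neg_mul _ _).symm
      rw [hexp]; ring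
    exact hs1.tendsto_sum_nat
  -- abs summable version and tsum bound
  have habsum : ∀ t : ℝ, 0 < t →
      Summable fun j => |(Real.exp (-(lam j) * t) * ⟪g, e j⟫) * ⟪y, e j⟫| := by
    intro t ht
    refine Summable.of_nonneg_of_le (fun j => abs_nonneg _) (fun j => ?_) hab
    rw [abs_mul, abs_mul]
    have hexp : Real.exp (-(lam j) * t) ≤ 1 := by
      rw [Real.exp_le_one_iff]
      have := (hpos j).le
      nlinarith
    have h1 : |Real.exp (-(lam j) * t)| ≤ 1 := by
      rw [abs_of_pos (Real.exp_pos _)]; exact hexp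
    exact mul_le_mul_of_nonneg_right (mul_le_of_le_one_left (abs_nonneg _) h1) (abs_nonneg _)
  have habs_sum : ∀ t : ℝ, 0 < t → |⟪semiGp lam e t g, y⟫| ≤
      (∑' j, |⟪g, e j⟫| * |⟪y, e j⟫|) * Real.exp (-(lam 0 * t)) := by
    intro t ht
    rw [hsemi t ht]
    have hterm : ∀ j, |(Real.exp (-(lam j) * t) * ⟪g, e j⟫) * ⟪y, e j⟫| ≤
        (|⟪g, e j⟫| * |⟪y, e j⟫|) * Real.exp (-(lam 0 * t)) := by
      intro j
      rw [abs_mul, abs_mul, abs_of_pos (Real.exp_pos _)]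
      have hexp2 : Real.exp (-(lam j) * t) ≤ Real.exp (-(lam 0 * t)) := by
        apply Real.exp_le_exp.mpr
        nlinarith [hlow j]
      calc Real.exp (-(lam j) * t) * |⟪g, e j⟫| * |⟪y, e j⟫|
          ≤ Real.exp (-(lam 0 * t)) * |⟪g, e j⟫| * |⟪y, e j⟫| :=
            mul_le_mul_of_nonneg_right
              (mul_le_mul_of_nonneg_right hexp2 (abs_nonneg _)) (abs_nonneg _)
        _ = (|⟪g, e j⟫| * |⟪y, e j⟫|) * Real.exp (-(lam 0 * t)) := by ring
    calc |∑' j, (Real.exp (-(lam j) * t) * ⟪g, e j⟫) * ⟪y, e j⟫|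
        ≤ ∑' j, |(Real.exp (-(lam j) * t) * ⟪g, e j⟫) * ⟪y, e j⟫| := by
          have hns : Summable fun j => ‖(Real.exp (-(lam j) * t) * ⟪g, e j⟫) * ⟪y, e j⟫‖ := by
            simpa only [Real.norm_eq_abs] using habsum t ht
          have h2 := norm_tsum_le_tsum_norm hns
          simpa only [Real.norm_eq_abs] using h2
      _ ≤ ∑' j, (|⟪g, e j⟫| * |⟪y, e j⟫|) * Real.exp (-(lam 0 * t)) :=
          Summable.tsum_le_tsum hterm (habsum t ht) (hab.mul_right _)
      _ = (∑' j, |⟪g, e j⟫| * |⟪y, e j⟫|) * Real.exp (-(lam 0 * t)) := tsum_mul_right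
  have hbound : IntegrableOn (fun t : ℝ => t ^ (β - 1) * ⟪semiGp lam e t g, y⟫)
      (Set.Ioi 0) := by
    refine Integrable.mono'
      ((baseInt hβ0 (hpos 0)).const_mul (∑' j, |⟪g, e j⟫| * |⟪y, e j⟫|)) hmeas ?_
    filter_upwards [ae_restrict_mem measurableSet_Ioi] with t ht
    have ht' : (0:ℝ) < t := ht
    rw [Real.norm_eq_abs, abs_mul, abs_of_nonneg (Real.rpow_nonneg ht'.le _)]
    calc t ^ (β - 1) * |⟪semiGp lam e t g, y⟫|
        ≤ t ^ (β - 1) * ((∑' j, |⟪g, e j⟫| * |⟪y, e j⟫|) * Real.exp (-(lam 0 * t))) :=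
          mul_le_mul_of_nonneg_left (habs_sum t ht') (Real.rpow_nonneg ht'.le _)
      _ = (∑' j, |⟪g, e j⟫| * |⟪y, e j⟫|) * (t ^ (β - 1) * Real.exp (-(lam 0 * t))) := by ring
  refine ⟨?_, hbound⟩
  calc Real.Gamma β * ⟪fracPow lam β e g, y⟫
      = ∑' j, (lam j ^ (-β) * Real.Gamma β) * (⟪g, e j⟫ * ⟪y, e j⟫) := by
        rw [hfrac, ← tsum_mul_left]
        exact tsum_congr fun j => by ring
    _ = ∑' j, ∫ t in Set.Ioi (0:ℝ),
          (t ^ (β - 1) * Real.exp (-(lam j * t))) * (⟪g, e j⟫ * ⟪y, e j⟫) :=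
        tsum_congr fun j => (hFval j).symm
    _ = ∫ t in Set.Ioi (0:ℝ), ∑' j,
          (t ^ (β - 1) * Real.exp (-(lam j * t))) * (⟪g, e j⟫ * ⟪y, e j⟫) := hswap
    _ = ∫ t in Set.Ioi (0:ℝ), t ^ (β - 1) * ⟪semiGp lam e t g, y⟫ :=
        setIntegral_congr_fun measurableSet_Ioi (fun t ht => hptwise t ht)

/-- Under Assumption (iv), with `2αβ > 1` and `θ` as specified, the
deterministic finite element error bound
`‖(L^{−β} − L_h^{−β}Π_h)g‖ ≤ C h^{min{d(2αβ−1), s}} ‖g‖_θ`. -/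
theorem stmt7
    {H : Type*} [NormedAddCommGroup H] [InnerProductSpace ℝ H] [CompleteSpace H]
    (e : ℕ → H) (he : Orthonormal ℝ e)
    (hbasis : (Submodule.span ℝ (Set.range e)).topologicalClosure = ⊤)
    (lam : ℕ → ℝ) (hlam_pos : ∀ j, 0 < lam j) (hlam_mono : Monotone lam)
    (β : ℝ) (hβ : β ∈ Set.Ioo (0 : ℝ) 1) (α : ℝ) (hα : 0 < α)
    (hαβ : 1 < 2 * α * β) (d : ℕ) (hd : 0 < d)
    (N : ℝ → ℕ) (eh : ℝ → ℕ → H) (lamh : ℝ → ℕ → ℝ)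
    (hlamh_pos : ∀ h j, 0 < lamh h j)
    (heh : ∀ h : ℝ, Orthonormal ℝ (fun j : Fin (N h) => eh h j))
    -- Assumption (iv)
    (h₀ : ℝ) (hh₀ : h₀ ∈ Set.Ioo (0 : ℝ) 1) (s : ℝ) (hsβ : 2 * β < s)
    (C₃ : ℝ) (hC₃ : 0 < C₃)
    (hiv : ∀ θ' σ : ℝ, 0 ≤ θ' → θ' ≤ σ → σ ≤ s → ∀ t : ℝ, 0 < t →
      ∀ h ∈ Set.Ioo (0 : ℝ) h₀, ∀ g : H, memDot lam θ' e g →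
      ‖semiGp lam e t g - semiGph (N h) (lamh h) (eh h) t g‖ ≤
        C₃ * h ^ σ * t ^ ((θ' - σ) / 2) * dotNorm lam θ' e g)
    -- θ as specified, with θ* = d(2αβ−1) − 2β
    (θ : ℝ)
    (hθ₁ : 0 ≤ (d : ℝ) * (2 * α * β - 1) - 2 * β →
      min ((d : ℝ) * (2 * α * β - 1) - 2 * β) (s - 2 * β) < θ)
    (hθ₂ : (d : ℝ) * (2 * α * β - 1) - 2 * β < 0 → θ = 0) :
    ∃ C > (0 : ℝ),
      ∀ g : H, memDot lam θ e g →
      ∀ h ∈ Set.Ioo (0 : ℝ) h₀,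
        ‖fracPow lam β e g - fracPowh (N h) (lamh h) β (eh h) g‖ ≤
          C * h ^ min ((d : ℝ) * (2 * α * β - 1)) s * dotNorm lam θ e g := by
  obtain ⟨hβ0, hβ1⟩ := hβ
  obtain ⟨hh₀0, hh₀1⟩ := hh₀
  have hΓ : (0:ℝ) < Real.Gamma β := Real.Gamma_pos_of_pos hβ0
  have hd1 : (1:ℝ) ≤ (d:ℝ) := by exact_mod_cast hd
  set σ : ℝ := min ((d : ℝ) * (2 * α * β - 1)) s with hσdef
  have hσpos : 0 < σ := lt_min (by nlinarith) (by linarith)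
  have hσs : σ ≤ s := min_le_right _ _
  have hθ0 : 0 ≤ θ := by
    rcases le_or_gt 0 ((d : ℝ) * (2 * α * β - 1) - 2 * β) with h' | h'
    · have h1 := hθ₁ h'
      have h2 : (0:ℝ) ≤ min ((d : ℝ) * (2 * α * β - 1) - 2 * β) (s - 2 * β) :=
        le_min h' (by linarith)
      linarith
    · exact le_of_eq (hθ₂ h').symm
  set θ'' : ℝ := min θ σ with hθ''def
  have hθ''0 : 0 ≤ θ'' := le_min hθ0 hσpos.le
  have hθ''σ : θ'' ≤ σ := min_le_right _ _
  have hθ''θ : θ'' ≤ θ := min_le_left _ _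
  have hkey : σ - 2 * β < θ'' := by
    rcases le_or_gt 0 ((d : ℝ) * (2 * α * β - 1) - 2 * β) with h' | h'
    · have h1 := hθ₁ h'
      have hmin : min ((d : ℝ) * (2 * α * β - 1) - 2 * β) (s - 2 * β) = σ - 2 * β := by
        rcases le_total ((d : ℝ) * (2 * α * β - 1)) s with h'' | h''
        · rw [hσdef, min_eq_left h'', min_eq_left (by linarith)]
        · rw [hσdef, min_eq_right h'', min_eq_right (by linarith)]
      rw [hmin] at h1
      exact lt_min h1 (by linarith)
    · have hθz := hθ₂ h'
      have h2 : σ ≤ (d : ℝ) * (2 * α * β - 1) := min_le_left _ _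
      have h3 : θ'' = 0 := by rw [hθ''def, hθz]; exact min_eq_left hσpos.le
      rw [h3]; linarith
  set K₁ : ℝ := lam 0 ^ ((θ'' - θ) / 2) with hK₁
  set K₂ : ℝ := lam 0 ^ ((0 - θ) / 2) with hK₂
  set I₁ : ℝ := ∫ t in Set.Ioc (0:ℝ) 1, t ^ (β - 1 + (θ'' - σ) / 2) with hI₁
  set I₂ : ℝ := ∫ t in Set.Ioi (1:ℝ), t ^ (β - 1 + (0 - s) / 2) with hI₂
  have hK₁pos : 0 < K₁ := Real.rpow_pos_of_pos (hlam_pos 0) _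
  have hK₂pos : 0 < K₂ := Real.rpow_pos_of_pos (hlam_pos 0) _
  have hI₁nn : 0 ≤ I₁ := setIntegral_nonneg measurableSet_Ioc
    (fun t ht => Real.rpow_nonneg ht.1.le _)
  have hI₂nn : 0 ≤ I₂ := setIntegral_nonneg measurableSet_Ioi
    (fun t ht => Real.rpow_nonneg (by have : (1:ℝ) < t := ht; linarith) _)
  set C0 : ℝ := C₃ * (I₁ * K₁ + I₂ * K₂) / Real.Gamma β with hC0
  refine ⟨max 1 C0, lt_of_lt_of_le one_pos (le_max_left _ _), ?_⟩
  intro g hg h hh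
  obtain ⟨hhpos, hhlt⟩ := hh
  have hh1 : h < 1 := lt_trans hhlt hh₀1
  have hdn : 0 ≤ dotNorm lam θ e g := Real.sqrt_nonneg _
  have hrp : 0 < h ^ σ := Real.rpow_pos_of_pos hhpos _
  -- dotNorm comparison
  have comp : ∀ θ₂ : ℝ, θ₂ ≤ θ → memDot lam θ₂ e g ∧
      dotNorm lam θ₂ e g ≤ lam 0 ^ ((θ₂ - θ) / 2) * dotNorm lam θ e g := by
    intro θ₂ hθ₂le
    have hterm : ∀ j, lam j ^ θ₂ * ⟪g, e j⟫ ^ 2 ≤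
        lam 0 ^ (θ₂ - θ) * (lam j ^ θ * ⟪g, e j⟫ ^ 2) := by
      intro j
      have h1 : lam j ^ θ₂ = lam j ^ (θ₂ - θ) * lam j ^ θ := by
        rw [← Real.rpow_add (hlam_pos j)]; ring_nf
      rw [h1, mul_assoc]
      refine mul_le_mul_of_nonneg_right ?_
        (mul_nonneg (Real.rpow_pos_of_pos (hlam_pos j) _).le (sq_nonneg _))
      exact Real.rpow_le_rpow_of_nonpos (hlam_pos 0) (hlam_mono (Nat.zero_le j)) (by linarith)
    have hnn : ∀ j, 0 ≤ lam j ^ θ₂ * ⟪g, e j⟫ ^ 2 :=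
      fun j => mul_nonneg (Real.rpow_pos_of_pos (hlam_pos j) _).le (sq_nonneg _)
    have hmem : memDot lam θ₂ e g :=
      Summable.of_nonneg_of_le hnn hterm (hg.mul_left _)
    refine ⟨hmem, ?_⟩
    rw [dotNorm, dotNorm]
    have h2 : (∑' j, lam j ^ θ₂ * ⟪g, e j⟫ ^ 2) ≤
        lam 0 ^ (θ₂ - θ) * ∑' j, lam j ^ θ * ⟪g, e j⟫ ^ 2 := by
      rw [← tsum_mul_left]
      exact Summable.tsum_le_tsum hterm hmem (hg.mul_left _)
    calc Real.sqrt (∑' j, lam j ^ θ₂ * ⟪g, e j⟫ ^ 2)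
        ≤ Real.sqrt (lam 0 ^ (θ₂ - θ) * ∑' j, lam j ^ θ * ⟪g, e j⟫ ^ 2) :=
          Real.sqrt_le_sqrt h2
      _ = lam 0 ^ ((θ₂ - θ) / 2) * Real.sqrt (∑' j, lam j ^ θ * ⟪g, e j⟫ ^ 2) := by
          rw [Real.sqrt_mul (Real.rpow_pos_of_pos (hlam_pos 0) _).le]
          congr 1
          have h4 : lam 0 ^ (θ₂ - θ) = (lam 0 ^ ((θ₂ - θ) / 2)) ^ 2 := by
            rw [← Real.rpow_natCast (lam 0 ^ ((θ₂ - θ) / 2)) 2,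
              ← Real.rpow_mul (hlam_pos 0).le]
            norm_num
          rw [h4, Real.sqrt_sq (Real.rpow_pos_of_pos (hlam_pos 0) _).le]
  set E : H := fracPow lam β e g - fracPowh (N h) (lamh h) β (eh h) g with hEdef
  by_cases hE0 : E = 0
  · rw [hE0, norm_zero]
    have : (0:ℝ) ≤ max 1 C0 := le_trans zero_le_one (le_max_left _ _)
    have := mul_nonneg (mul_nonneg this hrp.le) hdn
    linarith
  obtain ⟨hrep1, hint1⟩ := contRepr e he lam hlam_pos hlam_mono hβ0 g E
  obtain ⟨hrep2, hint2⟩ := discRepr (N h) (lamh h) (hlamh_pos h) (eh h) hβ0 g E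
  have hwInt : IntegrableOn (fun t : ℝ =>
      t ^ (β - 1) * ⟪semiGp lam e t g, E⟫ -
      t ^ (β - 1) * ⟪semiGph (N h) (lamh h) (eh h) t g, E⟫) (Set.Ioi 0) :=
    hint1.sub hint2
  have hEile : Real.Gamma β * ⟪E, E⟫ = ∫ t in Set.Ioi (0:ℝ),
      (t ^ (β - 1) * ⟪semiGp lam e t g, E⟫ -
       t ^ (β - 1) * ⟪semiGph (N h) (lamh h) (eh h) t g, E⟫) := by
    rw [integral_sub hint1 hint2, ← hrep1, ← hrep2]
    nth_rewrite 1 [hEdef]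
    rw [inner_sub_left, mul_sub]
  have hEnorm : 0 < ‖E‖ := norm_pos_iff.mpr hE0
  -- pointwise bounds
  have hDb1 : ∀ t ∈ Set.Ioc (0:ℝ) 1,
      t ^ (β - 1) * ⟪semiGp lam e t g, E⟫ -
      t ^ (β - 1) * ⟪semiGph (N h) (lamh h) (eh h) t g, E⟫ ≤
      (C₃ * h ^ σ * dotNorm lam θ'' e g * ‖E‖) * t ^ (β - 1 + (θ'' - σ) / 2) := by
    intro t ht
    have ht0 : 0 < t := ht.1
    have h1 : t ^ (β - 1) * ⟪semiGp lam e t g, E⟫ -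
        t ^ (β - 1) * ⟪semiGph (N h) (lamh h) (eh h) t g, E⟫ =
        t ^ (β - 1) * ⟪semiGp lam e t g - semiGph (N h) (lamh h) (eh h) t g, E⟫ := by
      rw [inner_sub_left]; ring
    rw [h1]
    have h2 : ⟪semiGp lam e t g - semiGph (N h) (lamh h) (eh h) t g, E⟫ ≤
        ‖semiGp lam e t g - semiGph (N h) (lamh h) (eh h) t g‖ * ‖E‖ :=
      real_inner_le_norm _ _
    have h3 := hiv θ'' σ hθ''0 hθ''σ hσs t ht0 h ⟨hhpos, hhlt⟩ g (comp θ'' hθ''θ).1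
    have h4 : ⟪semiGp lam e t g - semiGph (N h) (lamh h) (eh h) t g, E⟫ ≤
        (C₃ * h ^ σ * t ^ ((θ'' - σ) / 2) * dotNorm lam θ'' e g) * ‖E‖ :=
      h2.trans (mul_le_mul_of_nonneg_right h3 (norm_nonneg _))
    calc t ^ (β - 1) * ⟪semiGp lam e t g - semiGph (N h) (lamh h) (eh h) t g, E⟫
        ≤ t ^ (β - 1) * ((C₃ * h ^ σ * t ^ ((θ'' - σ) / 2) * dotNorm lam θ'' e g) * ‖E‖) :=
          mul_le_mul_of_nonneg_left h4 (Real.rpow_nonneg ht0.le _)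
      _ = (C₃ * h ^ σ * dotNorm lam θ'' e g * ‖E‖) * (t ^ (β - 1) * t ^ ((θ'' - σ) / 2)) := by
          ring
      _ = (C₃ * h ^ σ * dotNorm lam θ'' e g * ‖E‖) * t ^ (β - 1 + (θ'' - σ) / 2) := by
          rw [← Real.rpow_add ht0]
  have hDb2 : ∀ t ∈ Set.Ioi (1:ℝ),
      t ^ (β - 1) * ⟪semiGp lam e t g, E⟫ -
      t ^ (β - 1) * ⟪semiGph (N h) (lamh h) (eh h) t g, E⟫ ≤
      (C₃ * h ^ s * dotNorm lam 0 e g * ‖E‖) * t ^ (β - 1 + (0 - s) / 2) := by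
    intro t ht
    have ht1 : (1:ℝ) < t := ht
    have ht0 : 0 < t := lt_trans one_pos ht1
    have h1 : t ^ (β - 1) * ⟪semiGp lam e t g, E⟫ -
        t ^ (β - 1) * ⟪semiGph (N h) (lamh h) (eh h) t g, E⟫ =
        t ^ (β - 1) * ⟪semiGp lam e t g - semiGph (N h) (lamh h) (eh h) t g, E⟫ := by
      rw [inner_sub_left]; ring
    rw [h1]
    have h2 : ⟪semiGp lam e t g - semiGph (N h) (lamh h) (eh h) t g, E⟫ ≤
        ‖semiGp lam e t g - semiGph (N h) (lamh h) (eh h) t g‖ * ‖E‖ :=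
      real_inner_le_norm _ _
    have h3 := hiv 0 s le_rfl (by linarith) le_rfl t ht0 h ⟨hhpos, hhlt⟩ g (comp 0 hθ0).1
    have h4 : ⟪semiGp lam e t g - semiGph (N h) (lamh h) (eh h) t g, E⟫ ≤
        (C₃ * h ^ s * t ^ ((0 - s) / 2) * dotNorm lam 0 e g) * ‖E‖ :=
      h2.trans (mul_le_mul_of_nonneg_right h3 (norm_nonneg _))
    calc t ^ (β - 1) * ⟪semiGp lam e t g - semiGph (N h) (lamh h) (eh h) t g, E⟫
        ≤ t ^ (β - 1) * ((C₃ * h ^ s * t ^ ((0 - s) / 2) * dotNorm lam 0 e g) * ‖E‖) :=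
          mul_le_mul_of_nonneg_left h4 (Real.rpow_nonneg ht0.le _)
      _ = (C₃ * h ^ s * dotNorm lam 0 e g * ‖E‖) * (t ^ (β - 1) * t ^ ((0 - s) / 2)) := by
          ring
      _ = (C₃ * h ^ s * dotNorm lam 0 e g * ‖E‖) * t ^ (β - 1 + (0 - s) / 2) := by
          rw [← Real.rpow_add ht0]
  -- split the integral
  have hwIoc : IntegrableOn (fun t : ℝ =>
      t ^ (β - 1) * ⟪semiGp lam e t g, E⟫ -
      t ^ (β - 1) * ⟪semiGph (N h) (lamh h) (eh h) t g, E⟫) (Set.Ioc 0 1) :=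
    hwInt.mono_set Set.Ioc_subset_Ioi_self
  have hwIoi1 : IntegrableOn (fun t : ℝ =>
      t ^ (β - 1) * ⟪semiGp lam e t g, E⟫ -
      t ^ (β - 1) * ⟪semiGph (N h) (lamh h) (eh h) t g, E⟫) (Set.Ioi 1) :=
    hwInt.mono_set (Set.Ioi_subset_Ioi zero_le_one)
  have hb1int : IntegrableOn
      (fun t : ℝ => (C₃ * h ^ σ * dotNorm lam θ'' e g * ‖E‖) * t ^ (β - 1 + (θ'' - σ) / 2))
      (Set.Ioc 0 1) :=
    ((intervalIntegral.intervalIntegrable_rpow' (by linarith)).1).const_mul _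
  have hb2int : IntegrableOn
      (fun t : ℝ => (C₃ * h ^ s * dotNorm lam 0 e g * ‖E‖) * t ^ (β - 1 + (0 - s) / 2))
      (Set.Ioi 1) :=
    ((integrableOn_Ioi_rpow_of_lt (by linarith) zero_lt_one).const_mul _)
  have hsplit : (∫ t in Set.Ioi (0:ℝ),
      (t ^ (β - 1) * ⟪semiGp lam e t g, E⟫ -
       t ^ (β - 1) * ⟪semiGph (N h) (lamh h) (eh h) t g, E⟫)) =
      (∫ t in Set.Ioc (0:ℝ) 1,
        (t ^ (β - 1) * ⟪semiGp lam e t g, E⟫ -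
         t ^ (β - 1) * ⟪semiGph (N h) (lamh h) (eh h) t g, E⟫)) +
      ∫ t in Set.Ioi (1:ℝ),
        (t ^ (β - 1) * ⟪semiGp lam e t g, E⟫ -
         t ^ (β - 1) * ⟪semiGph (N h) (lamh h) (eh h) t g, E⟫) := by
    rw [← Set.Ioc_union_Ioi_eq_Ioi (zero_le_one (α := ℝ))]
    exact setIntegral_union Set.Ioc_disjoint_Ioi_same measurableSet_Ioi hwIoc hwIoi1
  have hIoc : (∫ t in Set.Ioc (0:ℝ) 1,
      (t ^ (β - 1) * ⟪semiGp lam e t g, E⟫ -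
       t ^ (β - 1) * ⟪semiGph (N h) (lamh h) (eh h) t g, E⟫)) ≤
      (C₃ * h ^ σ * dotNorm lam θ'' e g * ‖E‖) * I₁ := by
    have h5 := setIntegral_mono_on hwIoc hb1int measurableSet_Ioc hDb1
    rwa [MeasureTheory.integral_const_mul] at h5
  have hIoi : (∫ t in Set.Ioi (1:ℝ),
      (t ^ (β - 1) * ⟪semiGp lam e t g, E⟫ -
       t ^ (β - 1) * ⟪semiGph (N h) (lamh h) (eh h) t g, E⟫)) ≤
      (C₃ * h ^ s * dotNorm lam 0 e g * ‖E‖) * I₂ := by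
    have h5 := setIntegral_mono_on hwIoi1 hb2int measurableSet_Ioi hDb2
    rwa [MeasureTheory.integral_const_mul] at h5
  -- combine
  have hcmp1 : dotNorm lam θ'' e g ≤ K₁ * dotNorm lam θ e g := (comp θ'' hθ''θ).2
  have hcmp2 : dotNorm lam 0 e g ≤ K₂ * dotNorm lam θ e g := (comp 0 hθ0).2
  have hhs : h ^ s ≤ h ^ σ := Real.rpow_le_rpow_of_exponent_ge hhpos hh1.le hσs
  have hdn1 : 0 ≤ dotNorm lam θ'' e g := Real.sqrt_nonneg _
  have hdn2 : 0 ≤ dotNorm lam 0 e g := Real.sqrt_nonneg _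
  have hrs : 0 < h ^ s := Real.rpow_pos_of_pos hhpos _
  have hB1 : (C₃ * h ^ σ * dotNorm lam θ'' e g * ‖E‖) * I₁ ≤
      (C₃ * (h ^ σ * dotNorm lam θ e g) * ‖E‖) * (I₁ * K₁) := by
    have : C₃ * h ^ σ * dotNorm lam θ'' e g * ‖E‖ ≤
        C₃ * h ^ σ * (K₁ * dotNorm lam θ e g) * ‖E‖ := by
      refine mul_le_mul_of_nonneg_right (mul_le_mul_of_nonneg_left hcmp1 ?_) (norm_nonneg _)
      positivity
    calc (C₃ * h ^ σ * dotNorm lam θ'' e g * ‖E‖) * I₁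
        ≤ (C₃ * h ^ σ * (K₁ * dotNorm lam θ e g) * ‖E‖) * I₁ :=
          mul_le_mul_of_nonneg_right this hI₁nn
      _ = (C₃ * (h ^ σ * dotNorm lam θ e g) * ‖E‖) * (I₁ * K₁) := by ring
  have hB2 : (C₃ * h ^ s * dotNorm lam 0 e g * ‖E‖) * I₂ ≤
      (C₃ * (h ^ σ * dotNorm lam θ e g) * ‖E‖) * (I₂ * K₂) := by
    have h6 : C₃ * h ^ s * dotNorm lam 0 e g * ‖E‖ ≤
        C₃ * h ^ σ * (K₂ * dotNorm lam θ e g) * ‖E‖ := by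
      refine mul_le_mul_of_nonneg_right ?_ (norm_nonneg _)
      have h7 : C₃ * h ^ s ≤ C₃ * h ^ σ := mul_le_mul_of_nonneg_left hhs hC₃.le
      exact mul_le_mul h7 hcmp2 hdn2 (by positivity)
    calc (C₃ * h ^ s * dotNorm lam 0 e g * ‖E‖) * I₂
        ≤ (C₃ * h ^ σ * (K₂ * dotNorm lam θ e g) * ‖E‖) * I₂ :=
          mul_le_mul_of_nonneg_right h6 hI₂nn
      _ = (C₃ * (h ^ σ * dotNorm lam θ e g) * ‖E‖) * (I₂ * K₂) := by ring
  have hmain : Real.Gamma β * (‖E‖ * ‖E‖) ≤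
      (C₃ * (I₁ * K₁ + I₂ * K₂) * (h ^ σ * dotNorm lam θ e g)) * ‖E‖ := by
    have h8 : Real.Gamma β * (‖E‖ * ‖E‖) = Real.Gamma β * ⟪E, E⟫ := by
      rw [real_inner_self_eq_norm_mul_norm]
    rw [h8, hEile, hsplit]
    have := add_le_add (hIoc.trans hB1) (hIoi.trans hB2)
    calc _ ≤ (C₃ * (h ^ σ * dotNorm lam θ e g) * ‖E‖) * (I₁ * K₁) +
          (C₃ * (h ^ σ * dotNorm lam θ e g) * ‖E‖) * (I₂ * K₂) := this
      _ = (C₃ * (I₁ * K₁ + I₂ * K₂) * (h ^ σ * dotNorm lam θ e g)) * ‖E‖ := by ring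
  have h9 : Real.Gamma β * ‖E‖ ≤ C₃ * (I₁ * K₁ + I₂ * K₂) * (h ^ σ * dotNorm lam θ e g) := by
    have h10 : (Real.Gamma β * ‖E‖) * ‖E‖ ≤
        (C₃ * (I₁ * K₁ + I₂ * K₂) * (h ^ σ * dotNorm lam θ e g)) * ‖E‖ := by
      calc (Real.Gamma β * ‖E‖) * ‖E‖ = Real.Gamma β * (‖E‖ * ‖E‖) := by ring
        _ ≤ _ := hmain
    exact le_of_mul_le_mul_right h10 hEnorm
  have h11 : ‖E‖ ≤ C0 * (h ^ σ * dotNorm lam θ e g) := by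
    rw [hC0, div_mul_eq_mul_div, le_div_iff₀ hΓ]
    calc ‖E‖ * Real.Gamma β = Real.Gamma β * ‖E‖ := by ring
      _ ≤ _ := h9
      _ = C₃ * (I₁ * K₁ + I₂ * K₂) * (h ^ σ * dotNorm lam θ e g) := rfl
  calc ‖E‖ ≤ C0 * (h ^ σ * dotNorm lam θ e g) := h11
    _ ≤ max 1 C0 * (h ^ σ * dotNorm lam θ e g) :=
        mul_le_mul_of_nonneg_right (le_max_right _ _) (by positivity)
    _ = max 1 C0 * h ^ σ * dotNorm lam θ e g := by ring
end
end

section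
/- Suppose Assumption (iv) holds. Then for every ε > 0 there exists a constant C > 0, independent of h, such that ‖(L^{−β} − L_h^{−β}Π_h)g‖ ≤ C h^s ‖g‖_{s−2β+ε} for all g ∈ Ḣ^{s−2β+ε} and all h ∈ (0,h₀). -/
noncomputable section
open MeasureTheory ProbabilityTheory Real Filter
open scoped InnerProductSpace RealInnerProductSpace NNReal

variable {H : Type*} [NormedAddCommGroup H] [InnerProductSpace ℝ H]

section swAux

variable {H : Type*} [NormedAddCommGroup H] [InnerProductSpace ℝ H] [CompleteSpace H]

lemma sw_summable_smul {e : ℕ → H} (he : Orthonormal ℝ e) {c : ℕ → ℝ}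
    (hc : Summable fun j => c j ^ 2) : Summable fun j => c j • e j := by
  have h2 : Summable fun j => ‖c j‖ ^ 2 := by
    simpa [Real.norm_eq_abs, sq_abs] using hc
  have := (he.orthogonalFamily.summable_iff_norm_sq_summable c).2 h2
  simpa [LinearIsometry.toSpanSingleton_apply] using this

lemma sw_inner_tsum {f : ℕ → H} (hf : Summable f) (x : H) :
    ⟪∑' j, f j, x⟫ = ∑' j, ⟪f j, x⟫ := by
  have h := (innerSL ℝ x).map_tsum hf
  simp only [innerSL_apply_apply] at h
  calc ⟪∑' j, f j, x⟫ = ⟪x, ∑' j, f j⟫ := real_inner_comm _ _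
    _ = ∑' j, ⟪x, f j⟫ := h
    _ = ∑' j, ⟪f j, x⟫ := by simp [real_inner_comm]

lemma sw_integrableOn_rpow_exp {a r : ℝ} (ha : 0 < a) (hr : 0 < r) :
    MeasureTheory.IntegrableOn (fun t : ℝ => t ^ (a - 1) * Real.exp (-(r * t)))
      (Set.Ioi 0) := by
  have h := integrableOn_rpow_mul_exp_neg_mul_rpow (p := 1) (s := a - 1) (b := r)
    (by linarith) one_pos hr
  refine h.congr_fun (fun t ht => ?_) measurableSet_Ioi
  simp only [Real.rpow_one, neg_mul]

end swAux

set_option maxHeartbeats 2000000 in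
/-- Under Assumption (iv), the optimal deterministic finite element
error bound `‖(L^{−β} − L_h^{−β}Π_h)g‖ ≤ C h^s ‖g‖_{s−2β+ε}`. -/
theorem stmt8
    {H : Type*} [NormedAddCommGroup H] [InnerProductSpace ℝ H] [CompleteSpace H]
    (e : ℕ → H) (he : Orthonormal ℝ e)
    (hbasis : (Submodule.span ℝ (Set.range e)).topologicalClosure = ⊤)
    (lam : ℕ → ℝ) (hlam_pos : ∀ j, 0 < lam j) (hlam_mono : Monotone lam)
    (β : ℝ) (hβ : β ∈ Set.Ioo (0 : ℝ) 1)
    (N : ℝ → ℕ) (eh : ℝ → ℕ → H) (lamh : ℝ → ℕ → ℝ)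
    (hlamh_pos : ∀ h j, 0 < lamh h j)
    (heh : ∀ h : ℝ, Orthonormal ℝ (fun j : Fin (N h) => eh h j))
    -- Assumption (iv)
    (h₀ : ℝ) (hh₀ : h₀ ∈ Set.Ioo (0 : ℝ) 1) (s : ℝ) (hsβ : 2 * β < s)
    (C₃ : ℝ) (hC₃ : 0 < C₃)
    (hiv : ∀ θ' σ : ℝ, 0 ≤ θ' → θ' ≤ σ → σ ≤ s → ∀ t : ℝ, 0 < t →
      ∀ h ∈ Set.Ioo (0 : ℝ) h₀, ∀ g : H, memDot lam θ' e g →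
      ‖semiGp lam e t g - semiGph (N h) (lamh h) (eh h) t g‖ ≤
        C₃ * h ^ σ * t ^ ((θ' - σ) / 2) * dotNorm lam θ' e g) :
    ∀ ε > (0 : ℝ), ∃ C > (0 : ℝ),
      ∀ g : H, memDot lam (s - 2 * β + ε) e g →
      ∀ h ∈ Set.Ioo (0 : ℝ) h₀,
        ‖fracPow lam β e g - fracPowh (N h) (lamh h) β (eh h) g‖ ≤
          C * h ^ s * dotNorm lam (s - 2 * β + ε) e g := by
  obtain ⟨hβ0, hβ1⟩ := hβ
  obtain ⟨hh₀0, hh₀1⟩ := hh₀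
  intro ε hε
  set ε' : ℝ := min ε (2 * β) with hε'def
  have hε'pos : 0 < ε' := lt_min hε (by linarith)
  have hε'le : ε' ≤ 2 * β := min_le_right _ _
  have hε'ε : ε' ≤ ε := min_le_left _ _
  set θ : ℝ := s - 2 * β + ε' with hθdef
  set θ₂ : ℝ := s - 2 * β + ε with hθ₂def
  have hθpos : 0 < θ := by rw [hθdef]; linarith
  have hθs : θ ≤ s := by rw [hθdef]; linarith
  have hθθ₂ : θ ≤ θ₂ := by rw [hθdef, hθ₂def]; linarith
  have hθ₂pos : 0 < θ₂ := lt_of_lt_of_le hθpos hθθ₂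
  have hlam0 : 0 < lam 0 := hlam_pos 0
  have hΓ : 0 < Real.Gamma β := Real.Gamma_pos_of_pos hβ0
  have hq1 : (-1 : ℝ) < β - 1 + (θ - s) / 2 := by rw [hθdef]; linarith
  have hq2 : β - 1 + (0 - s) / 2 < -1 := by linarith
  set I1 : ℝ := ∫ t in Set.Ioc (0:ℝ) 1, t ^ (β - 1 + (θ - s) / 2) with hI1def
  set I2 : ℝ := ∫ t in Set.Ioi (1:ℝ), t ^ (β - 1 + (0 - s) / 2) with hI2def
  have hI1int : MeasureTheory.IntegrableOn
      (fun t : ℝ => t ^ (β - 1 + (θ - s) / 2)) (Set.Ioc 0 1) :=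
    (intervalIntegral.intervalIntegrable_rpow' hq1).1
  have hI2int : MeasureTheory.IntegrableOn
      (fun t : ℝ => t ^ (β - 1 + (0 - s) / 2)) (Set.Ioi 1) :=
    integrableOn_Ioi_rpow_of_lt hq2 one_pos
  have hI1nn : 0 ≤ I1 := MeasureTheory.setIntegral_nonneg measurableSet_Ioc
    fun t ht => Real.rpow_nonneg ht.1.le _
  have hI2nn : 0 ≤ I2 := MeasureTheory.setIntegral_nonneg measurableSet_Ioi
    fun t ht => Real.rpow_nonneg (by have : (1:ℝ) < t := ht; linarith) _
  have hsum_nn : 0 ≤ I1 * Real.sqrt (lam 0 ^ (θ - θ₂)) + I2 * Real.sqrt (lam 0 ^ (0 - θ₂)) :=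
    add_nonneg (mul_nonneg hI1nn (Real.sqrt_nonneg _)) (mul_nonneg hI2nn (Real.sqrt_nonneg _))
  refine ⟨C₃ / Real.Gamma β *
    (I1 * Real.sqrt (lam 0 ^ (θ - θ₂)) + I2 * Real.sqrt (lam 0 ^ (0 - θ₂))) + 1, ?_, ?_⟩
  · have : 0 ≤ C₃ / Real.Gamma β := le_of_lt (div_pos hC₃ hΓ)
    nlinarith [mul_nonneg this hsum_nn]
  intro g hg h hh
  obtain ⟨hh0, hh1⟩ := hh
  have hhs : 0 < h ^ s := Real.rpow_pos_of_pos hh0 s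
  set K : ℝ := dotNorm lam θ₂ e g with hKdef
  have hK0 : 0 ≤ K := Real.sqrt_nonneg _
  -- comparison of norms
  have hcomp : ∀ θ' : ℝ, θ' ≤ θ₂ → ∀ j,
      lam j ^ θ' * ⟪g, e j⟫ ^ 2 ≤ lam 0 ^ (θ' - θ₂) * (lam j ^ θ₂ * ⟪g, e j⟫ ^ 2) := by
    intro θ' hθ' j
    have h1 : lam j ^ θ' = lam j ^ (θ' - θ₂) * lam j ^ θ₂ := by
      rw [← Real.rpow_add (hlam_pos j)]; ring_nf
    have h2 : lam j ^ (θ' - θ₂) ≤ lam 0 ^ (θ' - θ₂) :=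
      Real.rpow_le_rpow_of_nonpos hlam0 (hlam_mono (Nat.zero_le j)) (by linarith)
    have h3 : (0:ℝ) ≤ lam j ^ θ₂ * ⟪g, e j⟫ ^ 2 :=
      mul_nonneg (Real.rpow_nonneg (hlam_pos j).le _) (sq_nonneg _)
    calc lam j ^ θ' * ⟪g, e j⟫ ^ 2
        = lam j ^ (θ' - θ₂) * (lam j ^ θ₂ * ⟪g, e j⟫ ^ 2) := by rw [h1]; ring
      _ ≤ lam 0 ^ (θ' - θ₂) * (lam j ^ θ₂ * ⟪g, e j⟫ ^ 2) :=
          mul_le_mul_of_nonneg_right h2 h3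
  have hmem : ∀ θ' : ℝ, θ' ≤ θ₂ → memDot lam θ' e g := fun θ' hθ' =>
    Summable.of_nonneg_of_le
      (fun j => mul_nonneg (Real.rpow_nonneg (hlam_pos j).le _) (sq_nonneg _))
      (hcomp θ' hθ') (hg.mul_left _)
  have hdot : ∀ θ' : ℝ, θ' ≤ θ₂ →
      dotNorm lam θ' e g ≤ Real.sqrt (lam 0 ^ (θ' - θ₂)) * K := by
    intro θ' hθ'
    have hle : (∑' j, lam j ^ θ' * ⟪g, e j⟫ ^ 2)
        ≤ lam 0 ^ (θ' - θ₂) * ∑' j, lam j ^ θ₂ * ⟪g, e j⟫ ^ 2 := by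
      rw [← tsum_mul_left]
      exact Summable.tsum_le_tsum (hcomp θ' hθ') (hmem θ' hθ') (hg.mul_left _)
    calc dotNorm lam θ' e g
        ≤ Real.sqrt (lam 0 ^ (θ' - θ₂) * ∑' j, lam j ^ θ₂ * ⟪g, e j⟫ ^ 2) :=
          Real.sqrt_le_sqrt hle
      _ = Real.sqrt (lam 0 ^ (θ' - θ₂)) * K := by
          rw [Real.sqrt_mul (Real.rpow_nonneg hlam0.le _)]; rfl
  have hdotnn : ∀ θ' : ℝ, 0 ≤ dotNorm lam θ' e g := fun _ => Real.sqrt_nonneg _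
  have hgsq : Summable fun j => (⟪g, e j⟫ : ℝ) ^ 2 := by
    have := hmem 0 hθ₂pos.le
    simpa [memDot, Real.rpow_zero] using this
  set Δ : H := fracPow lam β e g - fracPowh (N h) (lamh h) β (eh h) g with hΔdef
  -- the key inner-product estimate
  have key : ∀ x : H, Real.Gamma β * ⟪Δ, x⟫ ≤
      C₃ * h ^ s * (I1 * dotNorm lam θ e g + I2 * dotNorm lam 0 e g) * ‖x‖ := by
    intro x
    have hxsq : Summable fun j => (⟪e j, x⟫ : ℝ) ^ 2 := by
      have := he.inner_products_summable (x := x)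
      simpa [Real.norm_eq_abs, sq_abs] using this
    have hgx : Summable fun j => |(⟪g, e j⟫ : ℝ) * ⟪e j, x⟫| := by
      refine Summable.of_nonneg_of_le (fun j => abs_nonneg _) (fun j => ?_)
        ((hgsq.add hxsq).div_const 2)
      rw [abs_mul]
      nlinarith [sq_nonneg (|(⟪g, e j⟫ : ℝ)| - |(⟪e j, x⟫ : ℝ)|), sq_abs (⟪g, e j⟫ : ℝ),
        sq_abs (⟪e j, x⟫ : ℝ), abs_nonneg (⟪g, e j⟫ : ℝ), abs_nonneg (⟪e j, x⟫ : ℝ)]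
    set F : ℕ → ℝ → ℝ :=
      fun j t => t ^ (β - 1) * Real.exp (-(lam j * t)) * (⟪g, e j⟫ * ⟪e j, x⟫) with hFdef
    have hFint : ∀ j, MeasureTheory.Integrable (F j)
        (MeasureTheory.volume.restrict (Set.Ioi 0)) := fun j =>
      (sw_integrableOn_rpow_exp hβ0 (hlam_pos j)).mul_const _
    have hFval : ∀ j, (∫ t in Set.Ioi (0:ℝ), F j t)
        = Real.Gamma β * (lam j ^ (-β) * ⟪g, e j⟫ * ⟪e j, x⟫) := by
      intro j
      simp only [hFdef]
      rw [MeasureTheory.integral_mul_const,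
        Real.integral_rpow_mul_exp_neg_mul_Ioi hβ0 (hlam_pos j),
        one_div, Real.inv_rpow (hlam_pos j).le, ← Real.rpow_neg (hlam_pos j).le]
      ring
    have hFnorm : ∀ j, (∫ t in Set.Ioi (0:ℝ), ‖F j t‖)
        = (1 / lam j) ^ β * Real.Gamma β * |(⟪g, e j⟫ : ℝ) * ⟪e j, x⟫| := by
      intro j
      have heq : ∀ t ∈ Set.Ioi (0:ℝ), ‖F j t‖
          = t ^ (β - 1) * Real.exp (-(lam j * t)) * |(⟪g, e j⟫ : ℝ) * ⟪e j, x⟫| := by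
        intro t ht
        have ht0 : (0:ℝ) < t := ht
        simp only [hFdef]
        rw [Real.norm_eq_abs, abs_mul, abs_mul,
          abs_of_nonneg (Real.rpow_nonneg ht0.le _), Real.abs_exp]
      rw [MeasureTheory.setIntegral_congr_fun measurableSet_Ioi heq,
        MeasureTheory.integral_mul_const,
        Real.integral_rpow_mul_exp_neg_mul_Ioi hβ0 (hlam_pos j)]
    have hFsum : Summable fun j => ∫ t in Set.Ioi (0:ℝ), ‖F j t‖ := by
      refine Summable.of_nonneg_of_le
        (fun j => MeasureTheory.integral_nonneg fun t => norm_nonneg _)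
        (fun j => ?_) (hgx.mul_left ((1 / lam 0) ^ β * Real.Gamma β))
      rw [hFnorm j]
      have h1 : (1 / lam j) ^ β ≤ (1 / lam 0) ^ β := by
        apply Real.rpow_le_rpow (one_div_pos.mpr (hlam_pos j)).le _ hβ0.le
        exact one_div_le_one_div_of_le hlam0 (hlam_mono (Nat.zero_le j))
      have h2 : (0:ℝ) ≤ |(⟪g, e j⟫ : ℝ) * ⟪e j, x⟫| := abs_nonneg _
      calc (1 / lam j) ^ β * Real.Gamma β * |(⟪g, e j⟫ : ℝ) * ⟪e j, x⟫|
          ≤ (1 / lam 0) ^ β * Real.Gamma β * |(⟪g, e j⟫ : ℝ) * ⟪e j, x⟫| := by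
            apply mul_le_mul_of_nonneg_right _ h2
            exact mul_le_mul_of_nonneg_right h1 hΓ.le
        _ = (1 / lam 0) ^ β * Real.Gamma β * |(⟪g, e j⟫ : ℝ) * ⟪e j, x⟫| := rfl
    have hswap := MeasureTheory.integral_tsum_of_summable_integral_norm hFint hFsum
    -- identify the tsum side
    have hfracsum : Summable fun j => ((lam j) ^ (-β) * ⟪g, e j⟫) • e j := by
      apply sw_summable_smul he
      refine Summable.of_nonneg_of_le (fun j => sq_nonneg _) (fun j => ?_)
        (hgsq.mul_left (lam 0 ^ (-β) * lam 0 ^ (-β)))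
      have h2 : lam j ^ (-β) ≤ lam 0 ^ (-β) :=
        Real.rpow_le_rpow_of_nonpos hlam0 (hlam_mono (Nat.zero_le j)) (by linarith)
      have h3 : (0:ℝ) ≤ lam j ^ (-β) := Real.rpow_nonneg (hlam_pos j).le _
      have h4 : lam j ^ (-β) * lam j ^ (-β) ≤ lam 0 ^ (-β) * lam 0 ^ (-β) :=
        mul_le_mul h2 h2 h3 (Real.rpow_nonneg hlam0.le _)
      rw [mul_pow, pow_two]
      exact mul_le_mul_of_nonneg_right h4 (sq_nonneg _)
    have hfracinner : (⟪fracPow lam β e g, x⟫ : ℝ)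
        = ∑' j, lam j ^ (-β) * ⟪g, e j⟫ * ⟪e j, x⟫ := by
      simp only [fracPow]
      rw [sw_inner_tsum hfracsum]
      exact tsum_congr fun j => by rw [real_inner_smul_left]
    have hLHS : (∑' j, ∫ t in Set.Ioi (0:ℝ), F j t)
        = Real.Gamma β * ⟪fracPow lam β e g, x⟫ := by
      rw [hfracinner, ← tsum_mul_left]
      exact tsum_congr fun j => hFval j
    -- identify the integral side
    have hsemisum : ∀ t : ℝ, 0 < t →
        Summable fun j => (Real.exp (-(lam j) * t) * ⟪g, e j⟫) • e j := by
      intro t ht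
      apply sw_summable_smul he
      refine Summable.of_nonneg_of_le (fun j => sq_nonneg _) (fun j => ?_) hgsq
      rw [mul_pow]
      have h1 : Real.exp (-(lam j) * t) ≤ 1 :=
        Real.exp_le_one_iff.mpr (by nlinarith [hlam_pos j])
      have h2 : Real.exp (-(lam j) * t) ^ 2 ≤ 1 := by
        nlinarith [Real.exp_pos (-(lam j) * t)]
      calc Real.exp (-(lam j) * t) ^ 2 * ⟪g, e j⟫ ^ 2 ≤ 1 * ⟪g, e j⟫ ^ 2 :=
            mul_le_mul_of_nonneg_right h2 (sq_nonneg _)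
        _ = _ := one_mul _
    have hsemiinner : ∀ t : ℝ, 0 < t →
        (⟪semiGp lam e t g, x⟫ : ℝ)
          = ∑' j, Real.exp (-(lam j) * t) * ⟪g, e j⟫ * ⟪e j, x⟫ := by
      intro t ht
      simp only [semiGp]
      rw [sw_inner_tsum (hsemisum t ht)]
      exact tsum_congr fun j => by rw [real_inner_smul_left]
    have hEq : ∀ t ∈ Set.Ioi (0:ℝ), (∑' j, F j t)
        = t ^ (β - 1) * ⟪semiGp lam e t g, x⟫ := by
      intro t ht
      have ht0 : (0:ℝ) < t := ht
      rw [hsemiinner t ht0, ← tsum_mul_left]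
      refine tsum_congr fun j => ?_
      simp only [hFdef]
      rw [neg_mul]; ring
    -- discrete part
    have hShinner : ∀ t : ℝ, (⟪semiGph (N h) (lamh h) (eh h) t g, x⟫ : ℝ)
        = ∑ j ∈ Finset.range (N h),
            Real.exp (-(lamh h j) * t) * ⟪g, eh h j⟫ * ⟪eh h j, x⟫ := by
      intro t
      simp only [semiGph]
      rw [sum_inner]
      exact Finset.sum_congr rfl fun j _ => by rw [real_inner_smul_left]
    have hfunSh : (fun t : ℝ => t ^ (β - 1) * ⟪semiGph (N h) (lamh h) (eh h) t g, x⟫)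
        = fun t : ℝ => ∑ j ∈ Finset.range (N h),
            t ^ (β - 1) * Real.exp (-(lamh h j * t)) * (⟪g, eh h j⟫ * ⟪eh h j, x⟫) := by
      funext t
      rw [hShinner t, Finset.mul_sum]
      refine Finset.sum_congr rfl fun j _ => ?_
      rw [neg_mul]; ring
    have hShint : MeasureTheory.Integrable
        (fun t : ℝ => t ^ (β - 1) * ⟪semiGph (N h) (lamh h) (eh h) t g, x⟫)
        (MeasureTheory.volume.restrict (Set.Ioi 0)) := by
      rw [hfunSh]
      exact MeasureTheory.integrable_finset_sum _ fun j _ =>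
        (sw_integrableOn_rpow_exp hβ0 (hlamh_pos h j)).mul_const _
    have hShval : (∫ t in Set.Ioi (0:ℝ),
          t ^ (β - 1) * ⟪semiGph (N h) (lamh h) (eh h) t g, x⟫)
        = Real.Gamma β * ⟪fracPowh (N h) (lamh h) β (eh h) g, x⟫ := by
      rw [hfunSh, MeasureTheory.integral_finset_sum _ (fun j _ =>
        (sw_integrableOn_rpow_exp hβ0 (hlamh_pos h j)).mul_const _)]
      have hfr : (⟪fracPowh (N h) (lamh h) β (eh h) g, x⟫ : ℝ)
          = ∑ j ∈ Finset.range (N h), lamh h j ^ (-β) * ⟪g, eh h j⟫ * ⟪eh h j, x⟫ := by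
        simp only [fracPowh]
        rw [sum_inner]
        exact Finset.sum_congr rfl fun j _ => by rw [real_inner_smul_left]
      rw [hfr, Finset.mul_sum]
      refine Finset.sum_congr rfl fun j _ => ?_
      rw [MeasureTheory.integral_mul_const,
        Real.integral_rpow_mul_exp_neg_mul_Ioi hβ0 (hlamh_pos h j),
        one_div, Real.inv_rpow (hlamh_pos h j).le, ← Real.rpow_neg (hlamh_pos h j).le]
      ring
    -- measurability and integrability of the continuous part
    have htermsum : ∀ t : ℝ, 0 < t →
        Summable fun j => Real.exp (-(lam j) * t) * ⟪g, e j⟫ * ⟪e j, x⟫ := by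
      intro t ht
      refine Summable.of_abs (Summable.of_nonneg_of_le
        (fun j => abs_nonneg _) (fun j => ?_) hgx)
      have h1 : Real.exp (-(lam j) * t) ≤ 1 :=
        Real.exp_le_one_iff.mpr (by nlinarith [hlam_pos j])
      calc |Real.exp (-(lam j) * t) * ⟪g, e j⟫ * ⟪e j, x⟫|
          = Real.exp (-(lam j) * t) * |(⟪g, e j⟫ : ℝ) * ⟪e j, x⟫| := by
            rw [mul_assoc, abs_mul, Real.abs_exp]
        _ ≤ 1 * |(⟪g, e j⟫ : ℝ) * ⟪e j, x⟫| :=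
            mul_le_mul_of_nonneg_right h1 (abs_nonneg _)
        _ = |(⟪g, e j⟫ : ℝ) * ⟪e j, x⟫| := one_mul _
    have hfS_asm : MeasureTheory.AEStronglyMeasurable
        (fun t : ℝ => t ^ (β - 1) * ⟪semiGp lam e t g, x⟫)
        (MeasureTheory.volume.restrict (Set.Ioi 0)) := by
      have hmeas : ∀ n : ℕ, MeasureTheory.AEStronglyMeasurable
          (fun t : ℝ => ∑ j ∈ Finset.range n, F j t)
          (MeasureTheory.volume.restrict (Set.Ioi 0)) := by
        intro n
        apply Measurable.aestronglyMeasurable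
        apply Finset.measurable_sum
        intro j _
        simp only [hFdef]
        fun_prop
      refine aestronglyMeasurable_of_tendsto_ae atTop hmeas ?_
      filter_upwards [MeasureTheory.ae_restrict_mem measurableSet_Ioi] with t ht
      have ht0 : (0:ℝ) < t := ht
      have hsumm : Summable fun j => F j t := by
        refine ((htermsum t ht0).mul_left (t ^ (β - 1))).congr fun j => ?_
        simp only [hFdef]
        rw [neg_mul]; ring
      have hlim := hsumm.hasSum.tendsto_sum_nat
      rwa [hEq t ht] at hlim
    set Mx : ℝ := ∑' j, |(⟪g, e j⟫ : ℝ) * ⟪e j, x⟫| with hMxdef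
    have hfS_bound : ∀ t ∈ Set.Ioi (0:ℝ),
        ‖t ^ (β - 1) * ⟪semiGp lam e t g, x⟫‖
          ≤ t ^ (β - 1) * Real.exp (-(lam 0 * t)) * Mx := by
      intro t ht
      have ht0 : (0:ℝ) < t := ht
      rw [Real.norm_eq_abs, abs_mul, abs_of_nonneg (Real.rpow_nonneg ht0.le _),
        hsemiinner t ht0]
      have habs : |∑' j, Real.exp (-(lam j) * t) * ⟪g, e j⟫ * ⟪e j, x⟫|
          ≤ Real.exp (-(lam 0 * t)) * Mx := by
        have hsum1 : Summable fun j => ‖Real.exp (-(lam j) * t) * ⟪g, e j⟫ * ⟪e j, x⟫‖ := by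
          refine Summable.of_nonneg_of_le (fun j => norm_nonneg _) (fun j => ?_) hgx
          rw [Real.norm_eq_abs, mul_assoc, abs_mul, Real.abs_exp]
          have h1 : Real.exp (-(lam j) * t) ≤ 1 :=
            Real.exp_le_one_iff.mpr (by nlinarith [hlam_pos j])
          calc Real.exp (-(lam j) * t) * |(⟪g, e j⟫ : ℝ) * ⟪e j, x⟫|
              ≤ 1 * |(⟪g, e j⟫ : ℝ) * ⟪e j, x⟫| :=
                mul_le_mul_of_nonneg_right h1 (abs_nonneg _)
            _ = _ := one_mul _
        calc |∑' j, Real.exp (-(lam j) * t) * ⟪g, e j⟫ * ⟪e j, x⟫|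
            ≤ ∑' j, ‖Real.exp (-(lam j) * t) * ⟪g, e j⟫ * ⟪e j, x⟫‖ := by
              rw [← Real.norm_eq_abs]
              exact norm_tsum_le_tsum_norm hsum1
          _ ≤ ∑' j, Real.exp (-(lam 0 * t)) * |(⟪g, e j⟫ : ℝ) * ⟪e j, x⟫| := by
              refine Summable.tsum_le_tsum (fun j => ?_) hsum1
                (hgx.mul_left (Real.exp (-(lam 0 * t))))
              rw [Real.norm_eq_abs, mul_assoc, abs_mul, Real.abs_exp]
              refine mul_le_mul_of_nonneg_right ?_ (abs_nonneg _)
              apply Real.exp_le_exp.mpr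
              have := hlam_mono (Nat.zero_le j)
              nlinarith
          _ = Real.exp (-(lam 0 * t)) * Mx := tsum_mul_left
      calc t ^ (β - 1) * |∑' j, Real.exp (-(lam j) * t) * ⟪g, e j⟫ * ⟪e j, x⟫|
          ≤ t ^ (β - 1) * (Real.exp (-(lam 0 * t)) * Mx) :=
            mul_le_mul_of_nonneg_left habs (Real.rpow_nonneg ht0.le _)
        _ = t ^ (β - 1) * Real.exp (-(lam 0 * t)) * Mx := by ring
    have hfSint : MeasureTheory.Integrable
        (fun t : ℝ => t ^ (β - 1) * ⟪semiGp lam e t g, x⟫)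
        (MeasureTheory.volume.restrict (Set.Ioi 0)) := by
      refine MeasureTheory.Integrable.mono'
        ((sw_integrableOn_rpow_exp hβ0 hlam0).mul_const Mx) hfS_asm ?_
      filter_upwards [MeasureTheory.ae_restrict_mem measurableSet_Ioi] with t ht
      exact hfS_bound t ht
    have hSval : (∫ t in Set.Ioi (0:ℝ), t ^ (β - 1) * ⟪semiGp lam e t g, x⟫)
        = Real.Gamma β * ⟪fracPow lam β e g, x⟫ := by
      calc (∫ t in Set.Ioi (0:ℝ), t ^ (β - 1) * ⟪semiGp lam e t g, x⟫)
          = ∫ t in Set.Ioi (0:ℝ), ∑' j, F j t :=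
            MeasureTheory.setIntegral_congr_fun measurableSet_Ioi
              fun t ht => (hEq t ht).symm
        _ = ∑' j, ∫ t in Set.Ioi (0:ℝ), F j t := hswap.symm
        _ = Real.Gamma β * ⟪fracPow lam β e g, x⟫ := hLHS
    have hDint : MeasureTheory.Integrable
        (fun t : ℝ => t ^ (β - 1) *
          ⟪semiGp lam e t g - semiGph (N h) (lamh h) (eh h) t g, x⟫)
        (MeasureTheory.volume.restrict (Set.Ioi 0)) := by
      refine (hfSint.sub hShint).congr (Filter.Eventually.of_forall fun t => ?_)
      simp only [Pi.sub_apply, inner_sub_left]; ring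
    have hDval : Real.Gamma β * ⟪Δ, x⟫
        = ∫ t in Set.Ioi (0:ℝ), t ^ (β - 1) *
            ⟪semiGp lam e t g - semiGph (N h) (lamh h) (eh h) t g, x⟫ := by
      rw [hΔdef, inner_sub_left, mul_sub, ← hSval, ← hShval,
        ← MeasureTheory.integral_sub hfSint hShint]
      exact (MeasureTheory.setIntegral_congr_fun measurableSet_Ioi
        fun t ht => by simp only [Pi.sub_apply, inner_sub_left]; ring).symm
    -- the estimates
    have hest1 : ∀ t ∈ Set.Ioc (0:ℝ) 1,
        |t ^ (β - 1) * ⟪semiGp lam e t g - semiGph (N h) (lamh h) (eh h) t g, x⟫|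
          ≤ C₃ * h ^ s * dotNorm lam θ e g * ‖x‖ * t ^ (β - 1 + (θ - s) / 2) := by
      intro t ht
      obtain ⟨ht0, ht1⟩ := ht
      have hD := hiv θ s hθpos.le hθs le_rfl t ht0 h ⟨hh0, hh1⟩ g (hmem θ hθθ₂)
      have hin : |(⟪semiGp lam e t g - semiGph (N h) (lamh h) (eh h) t g, x⟫ : ℝ)|
          ≤ ‖semiGp lam e t g - semiGph (N h) (lamh h) (eh h) t g‖ * ‖x‖ :=
        abs_real_inner_le_norm _ _
      calc |t ^ (β - 1) * ⟪semiGp lam e t g - semiGph (N h) (lamh h) (eh h) t g, x⟫|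
          = t ^ (β - 1) *
              |(⟪semiGp lam e t g - semiGph (N h) (lamh h) (eh h) t g, x⟫ : ℝ)| := by
            rw [abs_mul, abs_of_nonneg (Real.rpow_nonneg ht0.le _)]
        _ ≤ t ^ (β - 1) * (C₃ * h ^ s * t ^ ((θ - s) / 2) * dotNorm lam θ e g * ‖x‖) := by
            refine mul_le_mul_of_nonneg_left ?_ (Real.rpow_nonneg ht0.le _)
            exact hin.trans (mul_le_mul_of_nonneg_right hD (norm_nonneg x))
        _ = C₃ * h ^ s * dotNorm lam θ e g * ‖x‖ * (t ^ (β - 1) * t ^ ((θ - s) / 2)) := by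
            ring
        _ = C₃ * h ^ s * dotNorm lam θ e g * ‖x‖ * t ^ (β - 1 + (θ - s) / 2) := by
            rw [← Real.rpow_add ht0]
    have hest2 : ∀ t ∈ Set.Ioi (1:ℝ),
        |t ^ (β - 1) * ⟪semiGp lam e t g - semiGph (N h) (lamh h) (eh h) t g, x⟫|
          ≤ C₃ * h ^ s * dotNorm lam 0 e g * ‖x‖ * t ^ (β - 1 + (0 - s) / 2) := by
      intro t ht
      have ht0 : (0:ℝ) < t := lt_trans one_pos ht
      have hD := hiv 0 s le_rfl (by linarith) le_rfl t ht0 h ⟨hh0, hh1⟩ g (hmem 0 hθ₂pos.le)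
      have hin : |(⟪semiGp lam e t g - semiGph (N h) (lamh h) (eh h) t g, x⟫ : ℝ)|
          ≤ ‖semiGp lam e t g - semiGph (N h) (lamh h) (eh h) t g‖ * ‖x‖ :=
        abs_real_inner_le_norm _ _
      calc |t ^ (β - 1) * ⟪semiGp lam e t g - semiGph (N h) (lamh h) (eh h) t g, x⟫|
          = t ^ (β - 1) *
              |(⟪semiGp lam e t g - semiGph (N h) (lamh h) (eh h) t g, x⟫ : ℝ)| := by
            rw [abs_mul, abs_of_nonneg (Real.rpow_nonneg ht0.le _)]
        _ ≤ t ^ (β - 1) * (C₃ * h ^ s * t ^ ((0 - s) / 2) * dotNorm lam 0 e g * ‖x‖) := by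
            refine mul_le_mul_of_nonneg_left ?_ (Real.rpow_nonneg ht0.le _)
            exact hin.trans (mul_le_mul_of_nonneg_right hD (norm_nonneg x))
        _ = C₃ * h ^ s * dotNorm lam 0 e g * ‖x‖ * (t ^ (β - 1) * t ^ ((0 - s) / 2)) := by
            ring
        _ = C₃ * h ^ s * dotNorm lam 0 e g * ‖x‖ * t ^ (β - 1 + (0 - s) / 2) := by
            rw [← Real.rpow_add ht0]
    -- split the integral and conclude
    have habs_int : MeasureTheory.IntegrableOn
        (fun t : ℝ => |t ^ (β - 1) *
          ⟪semiGp lam e t g - semiGph (N h) (lamh h) (eh h) t g, x⟫|)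
        (Set.Ioi 0) := hDint.abs
    have hsplit : (∫ t in Set.Ioi (0:ℝ), |t ^ (β - 1) *
          ⟪semiGp lam e t g - semiGph (N h) (lamh h) (eh h) t g, x⟫|)
        = (∫ t in Set.Ioc (0:ℝ) 1, |t ^ (β - 1) *
            ⟪semiGp lam e t g - semiGph (N h) (lamh h) (eh h) t g, x⟫|)
          + ∫ t in Set.Ioi (1:ℝ), |t ^ (β - 1) *
            ⟪semiGp lam e t g - semiGph (N h) (lamh h) (eh h) t g, x⟫| := by
      rw [← MeasureTheory.setIntegral_union (Set.Ioc_disjoint_Ioi le_rfl) measurableSet_Ioi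
        (habs_int.mono_set Set.Ioc_subset_Ioi_self)
        (habs_int.mono_set (Set.Ioi_subset_Ioi zero_le_one)),
        Set.Ioc_union_Ioi_eq_Ioi zero_le_one]
    have hA : (∫ t in Set.Ioc (0:ℝ) 1, |t ^ (β - 1) *
          ⟪semiGp lam e t g - semiGph (N h) (lamh h) (eh h) t g, x⟫|)
        ≤ C₃ * h ^ s * dotNorm lam θ e g * ‖x‖ * I1 := by
      have := MeasureTheory.setIntegral_mono_on
        (habs_int.mono_set Set.Ioc_subset_Ioi_self)
        (hI1int.const_mul (C₃ * h ^ s * dotNorm lam θ e g * ‖x‖))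
        measurableSet_Ioc hest1
      rwa [MeasureTheory.integral_const_mul] at this
    have hB : (∫ t in Set.Ioi (1:ℝ), |t ^ (β - 1) *
          ⟪semiGp lam e t g - semiGph (N h) (lamh h) (eh h) t g, x⟫|)
        ≤ C₃ * h ^ s * dotNorm lam 0 e g * ‖x‖ * I2 := by
      have := MeasureTheory.setIntegral_mono_on
        (habs_int.mono_set (Set.Ioi_subset_Ioi zero_le_one))
        (hI2int.const_mul (C₃ * h ^ s * dotNorm lam 0 e g * ‖x‖))
        measurableSet_Ioi hest2
      rwa [MeasureTheory.integral_const_mul] at this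
    calc Real.Gamma β * ⟪Δ, x⟫ ≤ |Real.Gamma β * ⟪Δ, x⟫| := le_abs_self _
      _ = |∫ t in Set.Ioi (0:ℝ), t ^ (β - 1) *
            ⟪semiGp lam e t g - semiGph (N h) (lamh h) (eh h) t g, x⟫| := by rw [hDval]
      _ ≤ ∫ t in Set.Ioi (0:ℝ), |t ^ (β - 1) *
            ⟪semiGp lam e t g - semiGph (N h) (lamh h) (eh h) t g, x⟫| := by
          simpa only [Real.norm_eq_abs] using
            MeasureTheory.norm_integral_le_integral_norm (μ :=
              MeasureTheory.volume.restrict (Set.Ioi 0))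
              (fun t : ℝ => t ^ (β - 1) *
                ⟪semiGp lam e t g - semiGph (N h) (lamh h) (eh h) t g, x⟫)
      _ = _ + _ := hsplit
      _ ≤ C₃ * h ^ s * dotNorm lam θ e g * ‖x‖ * I1
            + C₃ * h ^ s * dotNorm lam 0 e g * ‖x‖ * I2 := add_le_add hA hB
      _ = C₃ * h ^ s * (I1 * dotNorm lam θ e g + I2 * dotNorm lam 0 e g) * ‖x‖ := by ring
  -- conclude
  by_cases hzero : Δ = 0
  · rw [hzero, norm_zero]
    have hC : (0:ℝ) ≤ C₃ / Real.Gamma β *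
        (I1 * Real.sqrt (lam 0 ^ (θ - θ₂)) + I2 * Real.sqrt (lam 0 ^ (0 - θ₂))) + 1 := by
      have : 0 ≤ C₃ / Real.Gamma β := le_of_lt (div_pos hC₃ hΓ)
      nlinarith [mul_nonneg this hsum_nn]
    exact mul_nonneg (mul_nonneg hC hhs.le) hK0
  · have hnorm : 0 < ‖Δ‖ := norm_pos_iff.mpr hzero
    have hkey := key Δ
    rw [real_inner_self_eq_norm_sq] at hkey
    have h1 : dotNorm lam θ e g ≤ Real.sqrt (lam 0 ^ (θ - θ₂)) * K := hdot θ hθθ₂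
    have h2 : dotNorm lam 0 e g ≤ Real.sqrt (lam 0 ^ (0 - θ₂)) * K := hdot 0 hθ₂pos.le
    set B : ℝ := C₃ * h ^ s *
      (I1 * (Real.sqrt (lam 0 ^ (θ - θ₂)) * K) + I2 * (Real.sqrt (lam 0 ^ (0 - θ₂)) * K))
      with hBdef
    have hkey2 : Real.Gamma β * ‖Δ‖ ^ 2 ≤ B * ‖Δ‖ := by
      refine hkey.trans ?_
      rw [hBdef]
      have hmono : I1 * dotNorm lam θ e g + I2 * dotNorm lam 0 e g
          ≤ I1 * (Real.sqrt (lam 0 ^ (θ - θ₂)) * K)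
            + I2 * (Real.sqrt (lam 0 ^ (0 - θ₂)) * K) :=
        add_le_add (mul_le_mul_of_nonneg_left h1 hI1nn)
          (mul_le_mul_of_nonneg_left h2 hI2nn)
      have := mul_le_mul_of_nonneg_right (mul_le_mul_of_nonneg_left hmono
        (mul_nonneg hC₃.le hhs.le)) (norm_nonneg Δ)
      linarith
    have hΓΔ : Real.Gamma β * ‖Δ‖ ≤ B := by
      have h3 : Real.Gamma β * ‖Δ‖ * ‖Δ‖ ≤ B * ‖Δ‖ := by
        have : ‖Δ‖ ^ 2 = ‖Δ‖ * ‖Δ‖ := sq ‖Δ‖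
        nlinarith
      exact le_of_mul_le_mul_right h3 hnorm
    have hfinal : ‖Δ‖ ≤ C₃ / Real.Gamma β *
        (I1 * Real.sqrt (lam 0 ^ (θ - θ₂)) + I2 * Real.sqrt (lam 0 ^ (0 - θ₂)))
          * h ^ s * K := by
      rw [div_mul_eq_mul_div, div_mul_eq_mul_div, div_mul_eq_mul_div, le_div_iff₀ hΓ]
      calc ‖Δ‖ * Real.Gamma β = Real.Gamma β * ‖Δ‖ := mul_comm _ _
        _ ≤ B := hΓΔ
        _ = C₃ * (I1 * Real.sqrt (lam 0 ^ (θ - θ₂))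
              + I2 * Real.sqrt (lam 0 ^ (0 - θ₂))) * h ^ s * K := by rw [hBdef]; ring
    calc ‖Δ‖ ≤ C₃ / Real.Gamma β *
          (I1 * Real.sqrt (lam 0 ^ (θ - θ₂)) + I2 * Real.sqrt (lam 0 ^ (0 - θ₂)))
            * h ^ s * K := hfinal
      _ ≤ (C₃ / Real.Gamma β *
          (I1 * Real.sqrt (lam 0 ^ (θ - θ₂)) + I2 * Real.sqrt (lam 0 ^ (0 - θ₂))) + 1)
            * h ^ s * K := by
          have : (0:ℝ) ≤ h ^ s * K := mul_nonneg hhs.le hK0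
          nlinarith
      _ = _ := rfl
end
end

section
/- Let Assumptions (i)–(iii) hold, let p ≥ 2 be an integer, t ∈ [0,1] and g ∈ H, and set Ỹ_t := Q_{h,k}^β Π_h g + √t · Σ_{j=1}^{N_h} ξ_j Q_{h,k}^β e_{j,h} (which has the distribution of the value at time t of the process Ỹ solving dỸ(t) = Q_{h,k}^β P_h^β dW^β(t), Ỹ(0) = Q_{h,k}^β Π_h g). Then there exist constants C > 0, h₁ ∈ (0,h₀] and k₀ > 0, with C independent of h, k, t and g, such that for all h ∈ (0,h₁) and k ∈ (0,k₀): E[‖Ỹ_t‖^p] ≤ C (1 + e^{−pπ²/(2k)} h^{−pd/2} + ‖g‖^p). -/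
noncomputable section
open MeasureTheory ProbabilityTheory Real Filter
open scoped InnerProductSpace RealInnerProductSpace NNReal

variable {H : Type*} [NormedAddCommGroup H] [InnerProductSpace ℝ H]

open scoped ENNReal

section AuxLemmas

lemma add_pow_le2 {a b : ℝ} (ha : 0 ≤ a) (hb : 0 ≤ b) (p : ℕ) :
    (a + b) ^ p ≤ 2 ^ p * (a ^ p + b ^ p) := by
  have h1 : a + b ≤ 2 * max a b := by
    rcases le_total a b with h | h
    · rw [max_eq_right h]; linarith
    · rw [max_eq_left h]; linarith
  calc (a + b) ^ p ≤ (2 * max a b) ^ p :=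
        pow_le_pow_left₀ (by positivity) h1 p
    _ = 2 ^ p * (max a b) ^ p := mul_pow 2 _ p
    _ ≤ 2 ^ p * (a ^ p + b ^ p) := by
        apply mul_le_mul_of_nonneg_left _ (by positivity)
        rcases le_total a b with h | h
        · rw [max_eq_right h]; nlinarith [pow_nonneg ha p]
        · rw [max_eq_left h]; nlinarith [pow_nonneg hb p]

lemma ofReal_sqrt_pow {z : ℝ} (hz : 0 ≤ z) (p : ℕ) :
    ENNReal.ofReal (Real.sqrt z ^ p) = ENNReal.ofReal z ^ ((p : ℝ) / 2) := by
  rw [← Real.rpow_natCast (Real.sqrt z) p, Real.sqrt_eq_rpow, ← Real.rpow_mul hz,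
    ENNReal.ofReal_rpow_of_nonneg hz (by positivity)]
  congr 1
  ring

lemma norm_sum_sq {H : Type*} [NormedAddCommGroup H] [InnerProductSpace ℝ H] {n : ℕ}
    {v : ℕ → H} (hv : Orthonormal ℝ (fun i : Fin n => v i)) (b : ℕ → ℝ) :
    ‖∑ j ∈ Finset.range n, b j • v j‖ ^ 2 = ∑ j ∈ Finset.range n, (b j) ^ 2 := by
  rw [← Fin.sum_univ_eq_sum_range (fun j => b j • v j) n,
    ← Fin.sum_univ_eq_sum_range (fun j => (b j) ^ 2) n, ← real_inner_self_eq_norm_sq,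
    hv.inner_sum (fun i => b (i : ℕ)) (fun i => b (i : ℕ)) Finset.univ]
  simp [sq]

lemma bessel_sum {H : Type*} [NormedAddCommGroup H] [InnerProductSpace ℝ H] {n : ℕ}
    {v : ℕ → H} (hv : Orthonormal ℝ (fun i : Fin n => v i)) (x : H) :
    ∑ j ∈ Finset.range n, ⟪x, v j⟫ ^ 2 ≤ ‖x‖ ^ 2 := by
  rw [← Fin.sum_univ_eq_sum_range (fun j => ⟪x, v j⟫ ^ 2) n]
  have h := hv.sum_inner_products_le (s := Finset.univ) x
  simpa [real_inner_comm, Real.norm_eq_abs, sq_abs] using h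


lemma geomAux {ρ : ℝ} (hρ0 : 0 ≤ ρ) (hρ1 : ρ < 1) (T : Finset ℤ) (n : ℤ → ℕ)
    (hinj : ∀ x ∈ T, ∀ y ∈ T, n x = n y → x = y) :
    ∑ ℓ ∈ T, ρ ^ (n ℓ) ≤ (1 - ρ)⁻¹ := by
  calc ∑ ℓ ∈ T, ρ ^ (n ℓ) = ∑ m ∈ T.image n, ρ ^ m := (Finset.sum_image hinj).symm
  _ ≤ ∑' m : ℕ, ρ ^ m := Summable.sum_le_tsum _ (fun m _ => pow_nonneg hρ0 m)
      (summable_geometric_of_lt_one hρ0 hρ1)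
  _ = (1 - ρ)⁻¹ := tsum_geometric_of_lt_one hρ0 hρ1

lemma sum_exp_abs_le (S : Finset ℤ) (c u : ℝ) (hc : 0 < c) :
    ∑ ℓ ∈ S, Real.exp (-(c * |(ℓ : ℝ) + u|)) ≤ 2 * (1 - Real.exp (-c))⁻¹ := by
  have hρ0 : (0:ℝ) ≤ Real.exp (-c) := (Real.exp_pos _).le
  have hρ1 : Real.exp (-c) < 1 := Real.exp_lt_one_iff.mpr (by linarith)
  set ρ := Real.exp (-c) with hρ
  rw [← Finset.sum_filter_add_sum_filter_not S (fun ℓ : ℤ => ((ℓ:ℝ) + u < 0)), two_mul]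
  gcongr ?_ + ?_
  · -- negative side
    calc ∑ ℓ ∈ S.filter (fun ℓ : ℤ => ((ℓ:ℝ) + u < 0)), Real.exp (-(c * |(ℓ : ℝ) + u|))
        ≤ ∑ ℓ ∈ S.filter (fun ℓ : ℤ => ((ℓ:ℝ) + u < 0)), ρ ^ ((⌊-u⌋ - ℓ).toNat) := by
          apply Finset.sum_le_sum
          intro ℓ hℓ
          obtain ⟨-, hneg⟩ := Finset.mem_filter.mp hℓ
          have hle : (ℓ:ℝ) ≤ -u := by linarith
          have hfl : ℓ ≤ ⌊-u⌋ := Int.le_floor.mpr hle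
          have h1 : ((⌊-u⌋ - ℓ).toNat : ℝ) ≤ |(ℓ:ℝ) + u| := by
            rw [abs_of_neg hneg]
            have h2 : ((⌊-u⌋ - ℓ).toNat : ℤ) = ⌊-u⌋ - ℓ := Int.toNat_of_nonneg (by omega)
            have h3 : ((⌊-u⌋ - ℓ).toNat : ℝ) = (⌊-u⌋:ℝ) - (ℓ:ℝ) := by
              exact_mod_cast congrArg (Int.cast : ℤ → ℝ) h2
            rw [h3]
            have := Int.floor_le (-u)
            linarith
          rw [hρ, ← Real.exp_nat_mul]
          apply Real.exp_le_exp.mpr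
          nlinarith [hc]
      _ ≤ (1 - ρ)⁻¹ := by
          apply geomAux hρ0 hρ1
          intro x hx y hy hxy
          obtain ⟨-, hnx⟩ := Finset.mem_filter.mp hx
          obtain ⟨-, hny⟩ := Finset.mem_filter.mp hy
          have hfx : x ≤ ⌊-u⌋ := Int.le_floor.mpr (by linarith)
          have hfy : y ≤ ⌊-u⌋ := Int.le_floor.mpr (by linarith)
          omega
  · calc ∑ ℓ ∈ S.filter (fun ℓ : ℤ => ¬((ℓ:ℝ) + u < 0)), Real.exp (-(c * |(ℓ : ℝ) + u|))
        ≤ ∑ ℓ ∈ S.filter (fun ℓ : ℤ => ¬((ℓ:ℝ) + u < 0)), ρ ^ ((ℓ - ⌈-u⌉).toNat) := by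
          apply Finset.sum_le_sum
          intro ℓ hℓ
          obtain ⟨-, hpos⟩ := Finset.mem_filter.mp hℓ
          push_neg at hpos
          have hle : (-u : ℝ) ≤ ℓ := by linarith
          have hcl : ⌈-u⌉ ≤ ℓ := Int.ceil_le.mpr hle
          have h1 : ((ℓ - ⌈-u⌉).toNat : ℝ) ≤ |(ℓ:ℝ) + u| := by
            rw [abs_of_nonneg (by linarith)]
            have h2 : ((ℓ - ⌈-u⌉).toNat : ℤ) = ℓ - ⌈-u⌉ := Int.toNat_of_nonneg (by omega)
            have h3 : ((ℓ - ⌈-u⌉).toNat : ℝ) = (ℓ:ℝ) - (⌈-u⌉:ℝ) := by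
              exact_mod_cast congrArg (Int.cast : ℤ → ℝ) h2
            rw [h3]
            have := Int.le_ceil (-u)
            linarith
          rw [hρ, ← Real.exp_nat_mul]
          apply Real.exp_le_exp.mpr
          nlinarith [hc]
      _ ≤ (1 - ρ)⁻¹ := by
          apply geomAux hρ0 hρ1
          intro x hx y hy hxy
          obtain ⟨-, hnx⟩ := Finset.mem_filter.mp hx
          obtain ⟨-, hny⟩ := Finset.mem_filter.mp hy
          push_neg at hnx hny
          have hfx : ⌈-u⌉ ≤ x := Int.ceil_le.mpr (by linarith)
          have hfy : ⌈-u⌉ ≤ y := Int.ceil_le.mpr (by linarith)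
          omega

lemma quadCoeff_nonneg {β k μ : ℝ} (hβ0 : 0 < β) (hβ1 : β < 1) (hk : 0 < k) (hμ : 0 < μ) :
    0 ≤ quadCoeff β k μ := by
  unfold quadCoeff
  have hsin : 0 < Real.sin (π * β) := Real.sin_pos_of_pos_of_lt_pi
    (by positivity) (by nlinarith [Real.pi_pos])
  have hsum : 0 ≤ ∑ ℓ ∈ Finset.Icc (-(Kminus β k : ℤ)) (Kplus β k : ℤ),
      Real.exp (2 * β * (ℓ : ℝ) * k) / (1 + Real.exp (2 * (ℓ : ℝ) * k) * μ) :=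
    Finset.sum_nonneg fun ℓ _ => by positivity
  have hπ := Real.pi_pos
  positivity

lemma term_le {β k μ : ℝ} (hβ0 : 0 < β) (hβ1 : β < 1) (hμ : 0 < μ) (hk : 0 < k) (ℓ : ℤ) :
    Real.exp (2 * β * (ℓ : ℝ) * k) / (1 + Real.exp (2 * (ℓ : ℝ) * k) * μ) ≤
      μ ^ (-β) * Real.exp (-((2 * min β (1 - β) * k) * |(ℓ : ℝ) + Real.log μ / (2 * k)|)) := by
  set γ := min β (1 - β) with hγ
  have hγβ : γ ≤ β := min_le_left _ _
  have hγβ' : γ ≤ 1 - β := min_le_right _ _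
  have hγ0 : 0 < γ := lt_min hβ0 (by linarith)
  set u := Real.log μ / (2 * k) with hu
  have hμβ : μ ^ (-β) = Real.exp (-β * Real.log μ) := by
    rw [Real.rpow_def_of_pos hμ]; ring_nf
  have hlog : Real.log μ = 2 * k * u := by rw [hu]; field_simp
  rcases le_or_gt 0 ((ℓ : ℝ) + u) with hpos | hneg
  · have hden : Real.exp (2 * (ℓ : ℝ) * k) * μ ≤ 1 + Real.exp (2 * (ℓ : ℝ) * k) * μ := by
      linarith
    have e1 : Real.exp (2 * β * (ℓ : ℝ) * k) / (Real.exp (2 * (ℓ : ℝ) * k) * μ)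
        = Real.exp (2 * β * (ℓ : ℝ) * k - 2 * (ℓ : ℝ) * k - Real.log μ) := by
      rw [Real.exp_sub, Real.exp_sub, Real.exp_log hμ, div_div]
    calc Real.exp (2 * β * (ℓ : ℝ) * k) / (1 + Real.exp (2 * (ℓ : ℝ) * k) * μ)
        ≤ Real.exp (2 * β * (ℓ : ℝ) * k) / (Real.exp (2 * (ℓ : ℝ) * k) * μ) :=
          div_le_div_of_nonneg_left (Real.exp_pos _).le (by positivity) hden
      _ = μ ^ (-β) * Real.exp (-((2 * (1-β) * k) * ((ℓ : ℝ) + u))) := by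
          rw [e1, hμβ, ← Real.exp_add]
          congr 1
          rw [hlog]; ring
      _ ≤ μ ^ (-β) * Real.exp (-((2 * γ * k) * |(ℓ : ℝ) + u|)) := by
          apply mul_le_mul_of_nonneg_left _ (Real.rpow_nonneg hμ.le _)
          apply Real.exp_le_exp.mpr
          rw [abs_of_nonneg hpos]
          have h2 : 2 * γ * k ≤ 2 * (1 - β) * k := by nlinarith
          nlinarith [mul_le_mul_of_nonneg_right h2 hpos]
  · have hden : (1:ℝ) ≤ 1 + Real.exp (2 * (ℓ : ℝ) * k) * μ := by nlinarith [mul_pos (Real.exp_pos (2 * (ℓ:ℝ) * k)) hμ]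
    calc Real.exp (2 * β * (ℓ : ℝ) * k) / (1 + Real.exp (2 * (ℓ : ℝ) * k) * μ)
        ≤ Real.exp (2 * β * (ℓ : ℝ) * k) / 1 :=
          div_le_div_of_nonneg_left (Real.exp_pos _).le one_pos hden
      _ = μ ^ (-β) * Real.exp ((2 * β * k) * ((ℓ : ℝ) + u)) := by
          rw [div_one, hμβ, ← Real.exp_add]
          congr 1
          rw [hlog]; ring
      _ ≤ μ ^ (-β) * Real.exp (-((2 * γ * k) * |(ℓ : ℝ) + u|)) := by
          apply mul_le_mul_of_nonneg_left _ (Real.rpow_nonneg hμ.le _)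
          apply Real.exp_le_exp.mpr
          rw [abs_of_neg hneg]
          have h2 : 2 * γ * k ≤ 2 * β * k := by nlinarith
          nlinarith [mul_le_mul_of_nonpos_right h2 hneg.le]

lemma quadCoeff_le {β k μ : ℝ} (hβ0 : 0 < β) (hβ1 : β < 1) (hμ : 0 < μ) (hk : 0 < k)
    (hk' : 2 * min β (1 - β) * k ≤ 1) :
    quadCoeff β k μ ≤ 4 / (π * min β (1 - β)) * μ ^ (-β) := by
  set γ := min β (1 - β) with hγ
  have hγ0 : 0 < γ := lt_min hβ0 (by linarith)
  have hπ := Real.pi_pos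
  set c := 2 * γ * k with hc
  have hc0 : 0 < c := by positivity
  have hsum : ∑ ℓ ∈ Finset.Icc (-(Kminus β k : ℤ)) (Kplus β k : ℤ),
      Real.exp (2 * β * (ℓ : ℝ) * k) / (1 + Real.exp (2 * (ℓ : ℝ) * k) * μ)
      ≤ μ ^ (-β) * (2 * (1 - Real.exp (-c))⁻¹) := by
    calc _ ≤ ∑ ℓ ∈ Finset.Icc (-(Kminus β k : ℤ)) (Kplus β k : ℤ),
        μ ^ (-β) * Real.exp (-(c * |(ℓ : ℝ) + Real.log μ / (2 * k)|)) :=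
          Finset.sum_le_sum fun ℓ _ => term_le hβ0 hβ1 hμ hk ℓ
      _ = μ ^ (-β) * ∑ ℓ ∈ Finset.Icc (-(Kminus β k : ℤ)) (Kplus β k : ℤ),
          Real.exp (-(c * |(ℓ : ℝ) + Real.log μ / (2 * k)|)) := by
          rw [Finset.mul_sum]
      _ ≤ μ ^ (-β) * (2 * (1 - Real.exp (-c))⁻¹) :=
          mul_le_mul_of_nonneg_left (sum_exp_abs_le _ c _ hc0) (Real.rpow_nonneg hμ.le _)
  have hinv : (1 - Real.exp (-c))⁻¹ ≤ 2 / c := by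
    have h1 : Real.exp (-c) ≤ (1 + c)⁻¹ := by
      rw [Real.exp_neg]
      exact inv_anti₀ (by linarith) (by linarith [Real.add_one_le_exp c])
    have h2 : c / 2 ≤ 1 - Real.exp (-c) := by
      have h3 : (1 + c)⁻¹ ≤ 1 - c / 2 := by
        rw [inv_eq_one_div, div_le_iff₀ (by linarith)]
        nlinarith
      linarith
    calc (1 - Real.exp (-c))⁻¹ ≤ (c / 2)⁻¹ := by
          exact inv_anti₀ (by positivity) h2
      _ = 2 / c := by rw [inv_div]
  have hsin : Real.sin (π * β) ≤ 1 := Real.sin_le_one _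
  have hsin0 : 0 < Real.sin (π * β) := Real.sin_pos_of_pos_of_lt_pi
    (by positivity) (by nlinarith)
  have hsum0 : 0 ≤ ∑ ℓ ∈ Finset.Icc (-(Kminus β k : ℤ)) (Kplus β k : ℤ),
      Real.exp (2 * β * (ℓ : ℝ) * k) / (1 + Real.exp (2 * (ℓ : ℝ) * k) * μ) :=
    Finset.sum_nonneg fun ℓ _ => by positivity
  have hμβ0 : 0 ≤ μ ^ (-β) := Real.rpow_nonneg hμ.le _
  unfold quadCoeff
  calc 2 * k * Real.sin (π * β) / π * ∑ ℓ ∈ Finset.Icc (-(Kminus β k : ℤ)) (Kplus β k : ℤ),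
        Real.exp (2 * β * (ℓ : ℝ) * k) / (1 + Real.exp (2 * (ℓ : ℝ) * k) * μ)
      ≤ 2 * k * 1 / π * (μ ^ (-β) * (2 * (1 - Real.exp (-c))⁻¹)) := by
        apply mul_le_mul (by gcongr) hsum hsum0 (by positivity)
    _ ≤ 2 * k / π * (μ ^ (-β) * (2 * (2 / c))) := by
        have : (2:ℝ) * (1 - Real.exp (-c))⁻¹ ≤ 2 * (2 / c) := by linarith
        rw [mul_one]
        apply mul_le_mul_of_nonneg_left _ (by positivity)
        exact mul_le_mul_of_nonneg_left this hμβ0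
    _ = 4 / (π * γ) * μ ^ (-β) := by
        rw [hc]
        field_simp
        ring

lemma integrable_abs_pow_gauss (p : ℕ) :
    Integrable (fun x : ℝ => |x| ^ p * Real.exp (-(1/2) * x ^ 2)) := by
  apply Integrable.mono' (((integrable_exp_neg_mul_sq
    (by norm_num : (0:ℝ) < 1/4)).const_mul ((p.factorial : ℝ) * Real.exp 1)))
  · exact (((measurable_id.abs).pow_const p).mul
      (((measurable_id.pow_const 2).const_mul (-(1/2))).exp)).aestronglyMeasurable
  · refine ae_of_all _ fun x => ?_
    rw [Real.norm_of_nonneg (by positivity)]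
    have h1 : |x| ^ p ≤ (p.factorial : ℝ) * Real.exp |x| := by
      have h0 := Real.pow_div_factorial_le_exp |x| (abs_nonneg x) p
      rw [div_le_iff₀ (by positivity)] at h0
      linarith [h0]
    have h3 : Real.exp (|x| - (1/4) * x^2) ≤ Real.exp 1 := by
      apply Real.exp_le_exp.mpr
      nlinarith [sq_nonneg (|x| - 2), sq_abs x]
    calc |x| ^ p * Real.exp (-(1/2) * x ^ 2)
        ≤ ((p.factorial : ℝ) * Real.exp |x|) * Real.exp (-(1/2) * x ^ 2) := by
          apply mul_le_mul_of_nonneg_right h1 (Real.exp_pos _).le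
      _ = (p.factorial : ℝ) * (Real.exp (|x| - (1/4) * x^2) * Real.exp (-(1/4) * x ^ 2)) := by
          rw [mul_assoc, ← Real.exp_add, ← Real.exp_add]
          congr 1
          rw [Real.exp_eq_exp]
          ring
      _ ≤ (p.factorial : ℝ) * (Real.exp 1 * Real.exp (-(1/4) * x ^ 2)) := by
          apply mul_le_mul_of_nonneg_left _ (by positivity)
          exact mul_le_mul_of_nonneg_right h3 (Real.exp_pos _).le
      _ = (p.factorial : ℝ) * Real.exp 1 * Real.exp (-(1/4) * x ^ 2) := by ring

lemma Gm_lt_top (p : ℕ) :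
    (∫⁻ x, (‖x‖₊ : ℝ≥0∞) ^ (p : ℝ) ∂(gaussianReal 0 1)) < ⊤ := by
  rw [gaussianReal_of_var_ne_zero 0 one_ne_zero,
    lintegral_withDensity_eq_lintegral_mul _ (measurable_gaussianPDF _ _)
      ((measurable_nnnorm.coe_nnreal_ennreal).pow_const _)]
  refine lt_of_le_of_lt (lintegral_mono fun x => ?_)
    ((integrable_abs_pow_gauss p).lintegral_lt_top)
  show (gaussianPDF 0 1 x) * ((‖x‖₊ : ℝ≥0∞) ^ (p : ℝ)) ≤ _
  have h1 : (‖x‖₊ : ℝ≥0∞) ^ (p : ℝ) = ENNReal.ofReal (|x| ^ p) := by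
    rw [← enorm_eq_nnnorm, Real.enorm_eq_ofReal_abs, ENNReal.ofReal_rpow_of_nonneg (abs_nonneg x)
      (by positivity), Real.rpow_natCast]
  have h2 : gaussianPDF 0 1 x ≤ ENNReal.ofReal (Real.exp (-(1/2) * x ^ 2)) := by
    rw [gaussianPDF]
    apply ENNReal.ofReal_le_ofReal
    rw [gaussianPDFReal]
    have hs : (1:ℝ) ≤ Real.sqrt (2 * π * 1) := by
      rw [Real.one_le_sqrt]
      nlinarith [Real.pi_gt_three]
    have hinv : ((Real.sqrt (2 * π * 1))⁻¹ : ℝ) ≤ 1 := by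
      rw [inv_le_one_iff₀]; right; exact hs
    calc (Real.sqrt (2 * π * ((1:ℝ≥0):ℝ)))⁻¹ * Real.exp (-(x - 0)^2 / (2 * ((1:ℝ≥0):ℝ))) ≤
        1 * Real.exp (-(x - 0)^2 / (2 * ((1:ℝ≥0):ℝ))) := by
          apply mul_le_mul_of_nonneg_right _ (Real.exp_pos _).le
          push_cast
          exact hinv
      _ = Real.exp (-(1/2) * x ^ 2) := by
          push_cast
          rw [one_mul]
          ring_nf
  rw [h1, mul_comm]
  calc ENNReal.ofReal (|x| ^ p) * gaussianPDF 0 1 x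
      ≤ ENNReal.ofReal (|x| ^ p) * ENNReal.ofReal (Real.exp (-(1/2) * x ^ 2)) :=
        mul_le_mul_right h2 _
    _ = ENNReal.ofReal (|x| ^ p * Real.exp (-(1/2) * x ^ 2)) := by
        rw [ENNReal.ofReal_mul (by positivity)]

lemma moment_bound {Ω : Type*} [MeasurableSpace Ω] (P : Measure Ω) [IsProbabilityMeasure P]
    (ξ : ℕ → Ω → ℝ) (hξmeas : ∀ j, Measurable (ξ j))
    (hξgauss : ∀ j, Measure.map (ξ j) P = gaussianReal 0 1)
    (p : ℕ) (hp : 2 ≤ p) (n : ℕ) (a : ℕ → ℝ) (ha : ∀ j, 0 ≤ a j) :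
    ∫⁻ ω, (ENNReal.ofReal (∑ j ∈ Finset.range n, a j * ξ j ω ^ 2)) ^ ((p:ℝ)/2) ∂P ≤
      (ENNReal.ofReal (∑ j ∈ Finset.range n, a j)) ^ ((p:ℝ)/2) *
        ∫⁻ x, (‖x‖₊ : ℝ≥0∞) ^ (p : ℝ) ∂(gaussianReal 0 1) := by
  set G := ∫⁻ x, (‖x‖₊ : ℝ≥0∞) ^ (p : ℝ) ∂(gaussianReal 0 1) with hG
  set q : ℝ≥0∞ := (p : ℝ≥0∞) / 2 with hq
  have hppos : (0:ℝ) < (p:ℝ) := by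
    have : 0 < p := by omega
    exact_mod_cast this
  have hq1 : 1 ≤ q := by
    rw [hq, ENNReal.le_div_iff_mul_le (Or.inl (by norm_num)) (Or.inl (by norm_num)), one_mul]
    exact_mod_cast hp
  have hq0 : q ≠ 0 := by
    intro h
    rw [h] at hq1
    exact (not_le.mpr zero_lt_one) hq1
  have hqt : q ≠ ⊤ := (ENNReal.div_lt_top (by simp) (by norm_num)).ne
  have hqr : q.toReal = (p:ℝ)/2 := by
    rw [hq, ENNReal.toReal_div]
    norm_num
  have hqrpos : (0:ℝ) < (p:ℝ)/2 := by positivity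
  set F : Ω → ℝ := fun ω => ∑ j ∈ Finset.range n, a j * ξ j ω ^ 2 with hF
  have hFnn : ∀ ω, 0 ≤ F ω := fun ω =>
    Finset.sum_nonneg fun j _ => mul_nonneg (ha j) (sq_nonneg _)
  -- Step 1 : the lintegral equals (eLpNorm F q P) ^ (p/2)
  have step1 : ∫⁻ ω, (ENNReal.ofReal (F ω)) ^ ((p:ℝ)/2) ∂P = (eLpNorm F q P) ^ ((p:ℝ)/2) := by
    rw [eLpNorm_eq_lintegral_rpow_enorm_toReal hq0 hqt, ← ENNReal.rpow_mul, hqr,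
      one_div, inv_mul_cancel₀ (ne_of_gt hqrpos), ENNReal.rpow_one]
    apply lintegral_congr
    intro ω
    rw [Real.enorm_eq_ofReal (hFnn ω)]
  -- Step 3 : the eLpNorm of each ξ j ^ 2
  have step3 : ∀ j, eLpNorm (fun ω => ξ j ω ^ 2) q P = G ^ (1 / q.toReal) := by
    intro j
    rw [eLpNorm_eq_lintegral_rpow_enorm_toReal hq0 hqt]
    congr 1
    have hptw : ∀ ω, ‖ξ j ω ^ 2‖ₑ ^ q.toReal = (‖ξ j ω‖₊ : ℝ≥0∞) ^ (p:ℝ) := by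
      intro ω
      rw [enorm_eq_nnnorm, hqr, nnnorm_pow, ENNReal.coe_pow, ← ENNReal.rpow_natCast ((‖ξ j ω‖₊ : ℝ≥0∞)) 2,
        ← ENNReal.rpow_mul]
      congr 1
      push_cast
      ring
    rw [lintegral_congr hptw, ← lintegral_map (f := fun x : ℝ => (‖x‖₊ : ℝ≥0∞) ^ (p:ℝ))
      ((measurable_nnnorm.coe_nnreal_ennreal).pow_const _) (hξmeas j), hξgauss j]
  -- Step 2 : Minkowski
  have step2 : eLpNorm F q P ≤
      (∑ j ∈ Finset.range n, ENNReal.ofReal (a j)) * G ^ (1 / q.toReal) := by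
    have hFsum : F = ∑ j ∈ Finset.range n, (fun ω => a j * ξ j ω ^ 2) := by
      funext ω
      rw [hF]
      simp [Finset.sum_apply]
    rw [hFsum]
    refine (eLpNorm_sum_le (fun j _ => (((hξmeas j).pow_const 2).const_mul
      (a j)).aestronglyMeasurable) hq1).trans ?_
    rw [Finset.sum_mul]
    apply Finset.sum_le_sum
    intro j _
    have : (fun ω => a j * ξ j ω ^ 2) = (a j) • (fun ω => ξ j ω ^ 2) := by
      funext ω
      simp [smul_eq_mul]
    rw [this, eLpNorm_const_smul, step3 j, Real.enorm_eq_ofReal (ha j)]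
  -- assemble
  calc ∫⁻ ω, (ENNReal.ofReal (F ω)) ^ ((p:ℝ)/2) ∂P = (eLpNorm F q P) ^ ((p:ℝ)/2) := step1
    _ ≤ ((∑ j ∈ Finset.range n, ENNReal.ofReal (a j)) * G ^ (1 / q.toReal)) ^ ((p:ℝ)/2) :=
        ENNReal.rpow_le_rpow step2 hqrpos.le
    _ = (∑ j ∈ Finset.range n, ENNReal.ofReal (a j)) ^ ((p:ℝ)/2) *
        (G ^ (1 / q.toReal)) ^ ((p:ℝ)/2) := ENNReal.mul_rpow_of_nonneg _ _ hqrpos.le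
    _ = (ENNReal.ofReal (∑ j ∈ Finset.range n, a j)) ^ ((p:ℝ)/2) * G := by
        rw [← ENNReal.rpow_mul, hqr, one_div, inv_mul_cancel₀ (ne_of_gt hqrpos),
          ENNReal.rpow_one, ENNReal.ofReal_sum_of_nonneg (fun j _ => ha j)]

end AuxLemmas

set_option maxHeartbeats 2000000 in
/-- Moment bound for the approximate process
`Ỹ_t = Q_{h,k}^β Π_h g + √t Σ_j ξ_j Q_{h,k}^β e_{j,h}`:
`E[‖Ỹ_t‖^p] ≤ C(1 + e^{−pπ²/(2k)}h^{−pd/2} + ‖g‖^p)`, under Assumptions (i)–(iii). -/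
theorem stmt14
    {H : Type*} [NormedAddCommGroup H] [InnerProductSpace ℝ H] [CompleteSpace H]
    {Ω : Type*} [MeasurableSpace Ω] (P : Measure Ω) [IsProbabilityMeasure P]
    (e : ℕ → H) (he : Orthonormal ℝ e)
    (hbasis : (Submodule.span ℝ (Set.range e)).topologicalClosure = ⊤)
    (lam : ℕ → ℝ) (hlam_pos : ∀ j, 0 < lam j) (hlam_mono : Monotone lam)
    (β : ℝ) (hβ : β ∈ Set.Ioo (0 : ℝ) 1)
    (N : ℝ → ℕ) (eh : ℝ → ℕ → H) (lamh : ℝ → ℕ → ℝ)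
    (hlamh_pos : ∀ h j, 0 < lamh h j)
    (heh : ∀ h : ℝ, Orthonormal ℝ (fun j : Fin (N h) => eh h j))
    -- Assumption (i)
    (d : ℕ) (hd : 0 < d) (cN CN : ℝ) (hcN : 0 < cN) (hcNCN : cN ≤ CN)
    (hN : ∀ h ∈ Set.Ioo (0 : ℝ) 1,
      cN * h ^ (-(d : ℝ)) ≤ (N h : ℝ) ∧ (N h : ℝ) ≤ CN * h ^ (-(d : ℝ)))
    -- Assumption (ii)
    (C₁ C₂ h₀ : ℝ) (hC₁ : 0 < C₁) (hC₂ : 0 < C₂) (hh₀ : h₀ ∈ Set.Ioo (0 : ℝ) 1)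
    (r s q : ℝ) (hr : 0 < r) (hs : 0 < s) (hq : 1 < q)
    (hii : ∀ h ∈ Set.Ioo (0 : ℝ) h₀, ∀ j < N h,
      lam j ≤ lamh h j ∧ lamh h j ≤ lam j + C₁ * h ^ r * lam j ^ q ∧
      ‖e j - eh h j‖ ^ 2 ≤ C₂ * h ^ (2 * s) * lam j ^ q)
    -- Assumption (iii)
    (clam Clam α : ℝ) (hclam : 0 < clam) (hClam : 0 < Clam)
    (hα₁ : 1 / (2 * β) < α) (hα₂ : α ≤ min (r / ((q - 1) * d)) (2 * s / (q * d)))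
    (hiii : ∀ j : ℕ, clam * (j + 1 : ℝ) ^ α ≤ lam j ∧ lam j ≤ Clam * (j + 1 : ℝ) ^ α)
    -- noise
    (ξ : ℕ → Ω → ℝ) (hξmeas : ∀ j, Measurable (ξ j))
    (hξindep : iIndepFun ξ P)
    (hξgauss : ∀ j, Measure.map (ξ j) P = gaussianReal 0 1)
    (p : ℕ) (hp : 2 ≤ p) :
    ∃ C > (0 : ℝ), ∃ h₁ > (0 : ℝ), h₁ ≤ h₀ ∧ ∃ k₀ > (0 : ℝ),
      ∀ t ∈ Set.Icc (0 : ℝ) 1, ∀ g : H,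
      ∀ h : ℝ, 0 < h → h < h₁ → ∀ k : ℝ, 0 < k → k < k₀ →
        (∫ ω, ‖quadOp (N h) (lamh h) β k (eh h) g + Real.sqrt t •
            ∑ j ∈ Finset.range (N h), (ξ j ω * quadCoeff β k (lamh h j)) • eh h j‖ ^ p ∂P) ≤
          C * (1 + Real.exp (-(p : ℝ) * π ^ 2 / (2 * k)) * h ^ (-((p : ℝ) * d) / 2)
            + ‖g‖ ^ p) := by
  obtain ⟨hβ0, hβ1⟩ := hβ
  obtain ⟨hh₀0, hh₀1⟩ := hh₀
  have hπ := Real.pi_pos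
  set γ := min β (1 - β) with hγdef
  have hγ0 : 0 < γ := lt_min hβ0 (by linarith)
  set Cb : ℝ := 4 / (π * γ) with hCb
  have hCb0 : 0 < Cb := by positivity
  have hclamβ : (0:ℝ) < clam ^ (-β) := Real.rpow_pos_of_pos hclam _
  set D : ℝ := Cb * clam ^ (-β) with hD
  have hD0 : 0 < D := by positivity
  have h2s : 1 < 2 * (α * β) := by
    have := (div_lt_iff₀ (by positivity : (0:ℝ) < 2 * β)).mp hα₁
    nlinarith
  have hαβ : 0 < α * β := by nlinarith
  have hT : Summable (fun j : ℕ => ((j : ℝ) + 1) ^ (-(2 * (α * β)))) := by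
    have h1 : Summable (fun n : ℕ => 1 / ((n : ℝ) ^ (2 * (α * β)))) :=
      Real.summable_one_div_nat_rpow.mpr h2s
    have h2 := (summable_nat_add_iff 1).mpr h1
    apply h2.congr
    intro n
    push_cast
    rw [Real.rpow_neg (by positivity), one_div]
  set T : ℝ := ∑' j : ℕ, ((j : ℝ) + 1) ^ (-(2 * (α * β))) with hTdef
  have hT0 : 0 ≤ T := tsum_nonneg fun j => Real.rpow_nonneg (by positivity) _
  set A : ℝ := D ^ 2 * T with hA
  have hA0 : 0 ≤ A := by positivity
  set G : ℝ≥0∞ := ∫⁻ x, (‖x‖₊ : ℝ≥0∞) ^ (p : ℝ) ∂(gaussianReal 0 1) with hGdef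
  have hGtop : G ≠ ⊤ := (Gm_lt_top p).ne
  set Gr : ℝ := G.toReal with hGr
  have hGr0 : 0 ≤ Gr := ENNReal.toReal_nonneg
  have hGof : G = ENNReal.ofReal Gr := (ENNReal.ofReal_toReal hGtop).symm
  set C : ℝ := 2 ^ p * ((D ^ p + A ^ ((p:ℝ)/2) * Gr) + 1) with hC
  have hApow0 : (0:ℝ) ≤ A ^ ((p:ℝ)/2) := Real.rpow_nonneg hA0 _
  have hC0 : 0 < C := by positivity
  refine ⟨C, hC0, h₀, hh₀0, le_refl h₀, 1 / (2 * γ), by positivity, ?_⟩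
  intro t ht g h hh0 hh1 k hk0 hk1
  have hkγ : 2 * γ * k ≤ 1 := by
    have := (lt_div_iff₀ (by positivity : (0:ℝ) < 2 * γ)).mp hk1
    nlinarith
  set n := N h with hn
  have hcj0 : ∀ j, 0 ≤ quadCoeff β k (lamh h j) :=
    fun j => quadCoeff_nonneg hβ0 hβ1 hk0 (hlamh_pos h j)
  have hcjb : ∀ j < n, quadCoeff β k (lamh h j) ≤ D * ((j:ℝ)+1) ^ (-(α*β)) := by
    intro j hj
    have hlam0 := hlam_pos j
    have h1 : quadCoeff β k (lamh h j) ≤ Cb * (lamh h j) ^ (-β) :=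
      quadCoeff_le hβ0 hβ1 (hlamh_pos h j) hk0 hkγ
    have h2 : (lamh h j) ^ (-β) ≤ (lam j) ^ (-β) :=
      Real.rpow_le_rpow_of_nonpos hlam0 (hii h ⟨hh0, hh1⟩ j hj).1 (by linarith)
    have h3 : (lam j) ^ (-β) ≤ (clam * ((j:ℝ)+1)^α) ^ (-β) :=
      Real.rpow_le_rpow_of_nonpos (by positivity) (hiii j).1 (by linarith)
    have h4 : (clam * ((j:ℝ)+1)^α) ^ (-β) = clam ^ (-β) * (((j:ℝ)+1)^α) ^ (-β) :=
      Real.mul_rpow hclam.le (by positivity)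
    have h5 : (((j:ℝ)+1)^α) ^ (-β) = ((j:ℝ)+1) ^ (-(α*β)) := by
      rw [← Real.rpow_mul (by positivity)]
      congr 1
      ring
    calc quadCoeff β k (lamh h j) ≤ Cb * (lamh h j) ^ (-β) := h1
      _ ≤ Cb * ((clam * ((j:ℝ)+1)^α) ^ (-β)) :=
          mul_le_mul_of_nonneg_left (h2.trans h3) hCb0.le
      _ = D * ((j:ℝ)+1) ^ (-(α*β)) := by rw [h4, h5, hD]; ring
  have hsum2 : ∑ j ∈ Finset.range n, (quadCoeff β k (lamh h j))^2 ≤ A := by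
    have hterm : ∀ j ∈ Finset.range n, (quadCoeff β k (lamh h j))^2 ≤
        D^2 * ((j:ℝ)+1) ^ (-(2*(α*β))) := by
      intro j hj
      have e : (((j:ℝ)+1) ^ (-(α*β)))^2 = ((j:ℝ)+1) ^ (-(2*(α*β))) := by
        rw [← Real.rpow_natCast (((j:ℝ)+1) ^ (-(α*β))) 2, ← Real.rpow_mul (by positivity)]
        congr 1
        push_cast
        ring
      calc (quadCoeff β k (lamh h j))^2 ≤ (D * ((j:ℝ)+1) ^ (-(α*β)))^2 :=
            pow_le_pow_left₀ (hcj0 j) (hcjb j (Finset.mem_range.mp hj)) 2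
        _ = D^2 * ((j:ℝ)+1) ^ (-(2*(α*β))) := by rw [mul_pow, e]
    calc ∑ j ∈ Finset.range n, (quadCoeff β k (lamh h j))^2
        ≤ ∑ j ∈ Finset.range n, D^2 * ((j:ℝ)+1) ^ (-(2*(α*β))) := Finset.sum_le_sum hterm
      _ = D^2 * ∑ j ∈ Finset.range n, ((j:ℝ)+1) ^ (-(2*(α*β))) := by rw [Finset.mul_sum]
      _ ≤ D^2 * T :=
          mul_le_mul_of_nonneg_left
            (Summable.sum_le_tsum (Finset.range n) (fun j _ => Real.rpow_nonneg (by positivity) _) hT)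
            (by positivity)
      _ = A := hA.symm
  have hQ : ‖quadOp n (lamh h) β k (eh h) g‖ ≤ D * ‖g‖ := by
    have hsq : ‖quadOp n (lamh h) β k (eh h) g‖^2 ≤ (D*‖g‖)^2 := by
      have hunfold : quadOp n (lamh h) β k (eh h) g =
          ∑ j ∈ Finset.range n, (quadCoeff β k (lamh h j) * ⟪g, eh h j⟫) • eh h j := rfl
      rw [hunfold, norm_sum_sq (heh h)]
      calc ∑ j ∈ Finset.range n, (quadCoeff β k (lamh h j) * ⟪g, eh h j⟫)^2
          ≤ ∑ j ∈ Finset.range n, D^2 * ⟪g, eh h j⟫^2 := by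
            apply Finset.sum_le_sum
            intro j hj
            rw [mul_pow]
            apply mul_le_mul_of_nonneg_right _ (sq_nonneg _)
            exact pow_le_pow_left₀ (hcj0 j)
              ((hcjb j (Finset.mem_range.mp hj)).trans (by
                have h6 : ((j:ℝ)+1) ^ (-(α*β)) ≤ 1 :=
                  Real.rpow_le_one_of_one_le_of_nonpos (by push_cast; linarith) (by linarith)
                nlinarith)) 2
        _ = D^2 * ∑ j ∈ Finset.range n, ⟪g, eh h j⟫^2 := by rw [Finset.mul_sum]
        _ ≤ D^2 * ‖g‖^2 := mul_le_mul_of_nonneg_left (bessel_sum (heh h) g) (by positivity)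
        _ = (D*‖g‖)^2 := by ring
    exact (pow_le_pow_iff_left₀ (norm_nonneg _) (by positivity) two_ne_zero).mp hsq
  set W : Ω → ℝ := fun ω => ∑ j ∈ Finset.range n,
    (quadCoeff β k (lamh h j) * ⟪g, eh h j⟫ + Real.sqrt t * (ξ j ω * quadCoeff β k (lamh h j)))^2
    with hW
  set Z : Ω → ℝ := fun ω => ∑ j ∈ Finset.range n,
    (quadCoeff β k (lamh h j))^2 * ξ j ω^2 with hZ
  have hWnn : ∀ ω, 0 ≤ W ω := fun ω => Finset.sum_nonneg fun j _ => sq_nonneg _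
  have hZnn : ∀ ω, 0 ≤ Z ω := fun ω =>
    Finset.sum_nonneg fun j _ => mul_nonneg (sq_nonneg _) (sq_nonneg _)
  have hWmeas : Measurable W :=
    Finset.measurable_sum _ fun j _ =>
      ((measurable_const.add (((hξmeas j).mul_const _).const_mul _)).pow_const 2)
  have key2 : ∀ ω, ‖quadOp n (lamh h) β k (eh h) g + Real.sqrt t •
      ∑ j ∈ Finset.range n, (ξ j ω * quadCoeff β k (lamh h j)) • eh h j‖
      = Real.sqrt (W ω) := by
    intro ω
    have e1 : quadOp n (lamh h) β k (eh h) g + Real.sqrt t •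
        ∑ j ∈ Finset.range n, (ξ j ω * quadCoeff β k (lamh h j)) • eh h j
        = ∑ j ∈ Finset.range n, (quadCoeff β k (lamh h j) * ⟪g, eh h j⟫ +
            Real.sqrt t * (ξ j ω * quadCoeff β k (lamh h j))) • eh h j := by
      have hunfold : quadOp n (lamh h) β k (eh h) g =
          ∑ j ∈ Finset.range n, (quadCoeff β k (lamh h j) * ⟪g, eh h j⟫) • eh h j := rfl
      rw [hunfold, Finset.smul_sum, ← Finset.sum_add_distrib]
      apply Finset.sum_congr rfl
      intro j _
      rw [smul_smul, ← add_smul]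
    rw [e1, ← Real.sqrt_sq (norm_nonneg _), norm_sum_sq (heh h)]
  have hpoint : ∀ ω, Real.sqrt (W ω) ^ p ≤
      2^p * ((D*‖g‖)^p + Real.sqrt (Z ω)^p) := by
    intro ω
    have hXnorm : ‖∑ j ∈ Finset.range n, (ξ j ω * quadCoeff β k (lamh h j)) • eh h j‖
        = Real.sqrt (Z ω) := by
      rw [← Real.sqrt_sq (norm_nonneg _), norm_sum_sq (heh h)]
      congr 1
      apply Finset.sum_congr rfl
      intro j _
      ring
    have hst : Real.sqrt t ≤ 1 := by
      rw [show (1:ℝ) = Real.sqrt 1 from (Real.sqrt_one).symm]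
      exact Real.sqrt_le_sqrt ht.2
    have h2 : Real.sqrt (W ω) ≤ D*‖g‖ + Real.sqrt (Z ω) := by
      rw [← key2 ω]
      refine (norm_add_le _ _).trans ?_
      apply add_le_add hQ
      rw [norm_smul, Real.norm_of_nonneg (Real.sqrt_nonneg t), hXnorm]
      nlinarith [Real.sqrt_nonneg (Z ω)]
    calc Real.sqrt (W ω) ^ p ≤ (D*‖g‖ + Real.sqrt (Z ω)) ^ p :=
          pow_le_pow_left₀ (Real.sqrt_nonneg _) h2 p
      _ ≤ 2^p * ((D*‖g‖)^p + Real.sqrt (Z ω)^p) :=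
          add_pow_le2 (by positivity) (Real.sqrt_nonneg _) p
  have hE0 : 0 ≤ Real.exp (-(p : ℝ) * π ^ 2 / (2 * k)) * h ^ (-((p : ℝ) * d) / 2) :=
    mul_nonneg (Real.exp_pos _).le (Real.rpow_nonneg hh0.le _)
  have hgp : 0 ≤ ‖g‖^p := pow_nonneg (norm_nonneg g) p
  simp only [key2]
  rw [integral_eq_lintegral_of_nonneg_ae (ae_of_all _ fun ω => by positivity)
    (hWmeas.sqrt.pow_const p).aestronglyMeasurable]
  apply ENNReal.toReal_le_of_le_ofReal
    (mul_nonneg hC0.le (by linarith))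
  calc ∫⁻ ω, ENNReal.ofReal (Real.sqrt (W ω) ^ p) ∂P
      ≤ ∫⁻ ω, ENNReal.ofReal (2^p * ((D*‖g‖)^p + Real.sqrt (Z ω)^p)) ∂P :=
        lintegral_mono fun ω => ENNReal.ofReal_le_ofReal (hpoint ω)
    _ = ENNReal.ofReal ((2:ℝ)^p) * (ENNReal.ofReal ((D*‖g‖)^p) +
        ∫⁻ ω, (ENNReal.ofReal (Z ω))^((p:ℝ)/2) ∂P) := by
        have hptw : ∀ ω, ENNReal.ofReal (2^p * ((D*‖g‖)^p + Real.sqrt (Z ω)^p)) =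
            ENNReal.ofReal ((2:ℝ)^p) * (ENNReal.ofReal ((D*‖g‖)^p) +
              (ENNReal.ofReal (Z ω))^((p:ℝ)/2)) := by
          intro ω
          rw [ENNReal.ofReal_mul (by positivity),
            ENNReal.ofReal_add (by positivity) (by positivity), ofReal_sqrt_pow (hZnn ω) p]
        rw [lintegral_congr hptw, lintegral_const_mul' _ _ ENNReal.ofReal_ne_top,
          lintegral_add_left measurable_const, lintegral_const, measure_univ, mul_one]
    _ ≤ ENNReal.ofReal ((2:ℝ)^p) * (ENNReal.ofReal ((D*‖g‖)^p) +
        (ENNReal.ofReal A)^((p:ℝ)/2) * G) := by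
        gcongr
        refine (moment_bound P ξ hξmeas hξgauss p hp n _ (fun j => sq_nonneg _)).trans ?_
        exact mul_le_mul_left
          (ENNReal.rpow_le_rpow (ENNReal.ofReal_le_ofReal hsum2) (by positivity)) G
    _ = ENNReal.ofReal (2^p * ((D*‖g‖)^p + A^((p:ℝ)/2) * Gr)) := by
        rw [hGof, ENNReal.ofReal_rpow_of_nonneg hA0 (by positivity),
          ← ENNReal.ofReal_mul (by positivity), ← ENNReal.ofReal_add (by positivity)
            (by positivity), ← ENNReal.ofReal_mul (by positivity)]
    _ ≤ ENNReal.ofReal (C * (1 + Real.exp (-(p : ℝ) * π ^ 2 / (2 * k)) *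
        h ^ (-((p : ℝ) * d) / 2) + ‖g‖ ^ p)) := by
        apply ENNReal.ofReal_le_ofReal
        rw [hC, mul_pow]
        have h2p : (0:ℝ) < 2^p := by positivity
        have hDp : (0:ℝ) < D^p := pow_pos hD0 p
        nlinarith [mul_nonneg hApow0 hGr0, mul_nonneg (mul_nonneg hApow0 hGr0) hgp,
          mul_nonneg hDp.le hgp, mul_nonneg (mul_nonneg h2p.le hDp.le) hgp,
          mul_nonneg h2p.le hE0,
          mul_nonneg (mul_nonneg h2p.le (mul_nonneg hApow0 hGr0)) hE0,
          mul_nonneg (mul_nonneg h2p.le hDp.le) hE0,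
          mul_nonneg (mul_nonneg h2p.le (mul_nonneg hApow0 hGr0)) hgp]
end
end

section
/- Suppose Assumption (ii) holds and β ∈ (0,1). Then for all h ∈ (0,h₀) and all 1 ≤ j ≤ N_h: ‖λ_{j,h}^{−β} e_{j,h} − λ_j^{−β} e_j‖ ≤ max{β C₁, √C₂} (h^r λ_j^{q−β−1} + h^s λ_j^{q/2−β}). -/
noncomputable section
open MeasureTheory ProbabilityTheory Real Filter
open scoped InnerProductSpace RealInnerProductSpace NNReal

variable {H : Type*} [NormedAddCommGroup H] [InnerProductSpace ℝ H]

/-- Under Assumption (ii), the spectral error bound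
`‖λ_{j,h}^{−β} e_{j,h} − λ_j^{−β} e_j‖ ≤ max{βC₁, √C₂}(h^r λ_j^{q−β−1} + h^s λ_j^{q/2−β})`. -/
theorem stmt15
    {H : Type*} [NormedAddCommGroup H] [InnerProductSpace ℝ H]
    (e : ℕ → H) (he : Orthonormal ℝ e)
    (hbasis : (Submodule.span ℝ (Set.range e)).topologicalClosure = ⊤)
    (lam : ℕ → ℝ) (hlam_pos : ∀ j, 0 < lam j) (hlam_mono : Monotone lam)
    (β : ℝ) (hβ : β ∈ Set.Ioo (0 : ℝ) 1)
    (N : ℝ → ℕ) (eh : ℝ → ℕ → H) (lamh : ℝ → ℕ → ℝ)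
    (hlamh_pos : ∀ h j, 0 < lamh h j)
    (heh : ∀ h : ℝ, Orthonormal ℝ (fun j : Fin (N h) => eh h j))
    -- Assumption (ii)
    (C₁ C₂ h₀ : ℝ) (hC₁ : 0 < C₁) (hC₂ : 0 < C₂) (hh₀ : h₀ ∈ Set.Ioo (0 : ℝ) 1)
    (r s q : ℝ) (hr : 0 < r) (hs : 0 < s) (hq : 1 < q)
    (hii : ∀ h ∈ Set.Ioo (0 : ℝ) h₀, ∀ j < N h,
      lam j ≤ lamh h j ∧ lamh h j ≤ lam j + C₁ * h ^ r * lam j ^ q ∧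
      ‖e j - eh h j‖ ^ 2 ≤ C₂ * h ^ (2 * s) * lam j ^ q) :
    ∀ h ∈ Set.Ioo (0 : ℝ) h₀, ∀ j < N h,
      ‖(lamh h j ^ (-β)) • eh h j - (lam j ^ (-β)) • e j‖ ≤
        max (β * C₁) (Real.sqrt C₂) *
          (h ^ r * lam j ^ (q - β - 1) + h ^ s * lam j ^ (q / 2 - β)) := by
  
  intro h hh j hj
  obtain ⟨h1, h2, h3⟩ := hii h hh j hj
  set a := lam j with ha
  set b := lamh h j with hb
  have hap : 0 < a := hlam_pos j
  have hbp : 0 < b := hlamh_pos h j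
  have hhp : 0 < h := hh.1
  have heh1 : ‖eh h j‖ = 1 := by
    have := (heh h).1 ⟨j, hj⟩
    simpa using this
  have hapβ : 0 < a ^ β := Real.rpow_pos_of_pos hap β
  have hbpβ : 0 < b ^ β := Real.rpow_pos_of_pos hbp β
  have hab : a ^ β ≤ b ^ β := Real.rpow_le_rpow hap.le h1 hβ.1.le
  have hinv : a ^ (-β) - b ^ (-β) = (b ^ β - a ^ β) / (a ^ β * b ^ β) := by
    rw [Real.rpow_neg hap.le, Real.rpow_neg hbp.le]
    field_simp
  -- key scalar bound
  have key1 : a ^ (-β) - b ^ (-β) ≤ β * a ^ (-β - 1) * (b - a) := by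
    have hx : -1 ≤ (b - a) / a := by
      have : 0 ≤ (b - a) / a := div_nonneg (by linarith) hap.le
      linarith
    have hbern := rpow_one_add_le_one_add_mul_self hx hβ.1.le hβ.2.le
    have hba : (1 + (b - a) / a) = b / a := by field_simp; ring
    rw [hba, Real.div_rpow hbp.le hap.le] at hbern
    have hbβ : b ^ β ≤ a ^ β + β * a ^ (β - 1) * (b - a) := by
      have := (div_le_iff₀ hapβ).mp hbern
      calc b ^ β ≤ (1 + β * ((b - a) / a)) * a ^ β := this
        _ = a ^ β + β * a ^ (β - 1) * (b - a) := by
            rw [Real.rpow_sub hap, Real.rpow_one]; field_simp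
    rw [hinv]
    have hnum : b ^ β - a ^ β ≤ β * a ^ (β - 1) * (b - a) := by linarith
    calc (b ^ β - a ^ β) / (a ^ β * b ^ β)
        ≤ (β * a ^ (β - 1) * (b - a)) / (a ^ β * a ^ β) := by
          apply div_le_div₀ (mul_nonneg (mul_nonneg hβ.1.le (by positivity)) (by linarith)) hnum (by positivity)
          exact mul_le_mul_of_nonneg_left hab hapβ.le
      _ = β * a ^ (-β - 1) * (b - a) := by
          rw [Real.rpow_sub hap, Real.rpow_sub hap, Real.rpow_one, Real.rpow_neg hap.le]
          field_simp
  have hmono : b ^ (-β) ≤ a ^ (-β) := by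
    have : 0 ≤ (b ^ β - a ^ β) / (a ^ β * b ^ β) :=
      div_nonneg (by linarith) (by positivity)
    linarith [hinv]
  -- decompose
  have hdecomp : (b ^ (-β)) • eh h j - (a ^ (-β)) • e j
      = (b ^ (-β) - a ^ (-β)) • eh h j + (a ^ (-β)) • (eh h j - e j) := by
    rw [sub_smul, smul_sub]; abel
  have hnorm2 : ‖e j - eh h j‖ ≤ Real.sqrt C₂ * h ^ s * a ^ (q / 2) := by
    have h4 : ‖e j - eh h j‖ ≤ Real.sqrt (C₂ * h ^ (2 * s) * a ^ q) := by
      rw [← Real.sqrt_sq (norm_nonneg _)]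
      exact Real.sqrt_le_sqrt h3
    refine h4.trans_eq ?_
    rw [Real.sqrt_mul (by positivity), Real.sqrt_mul hC₂.le]
    simp only [Real.sqrt_eq_rpow]
    rw [← Real.rpow_mul hhp.le, ← Real.rpow_mul hap.le,
      show 2 * s * (1/2 : ℝ) = s by ring, show q * (1/2 : ℝ) = q / 2 by ring]
  have hprod1 : β * a ^ (-β - 1) * (b - a) ≤ β * C₁ * (h ^ r * a ^ (q - β - 1)) := by
    have hba' : b - a ≤ C₁ * h ^ r * a ^ q := by linarith
    have h5 : β * a ^ (-β - 1) * (b - a) ≤ β * a ^ (-β - 1) * (C₁ * h ^ r * a ^ q) :=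
      mul_le_mul_of_nonneg_left hba' (mul_nonneg hβ.1.le (by positivity))
    refine h5.trans_eq ?_
    rw [show q - β - 1 = -β - 1 + q by ring, Real.rpow_add hap]
    ring
  -- main estimate
  calc ‖(b ^ (-β)) • eh h j - (a ^ (-β)) • e j‖
      ≤ ‖(b ^ (-β) - a ^ (-β)) • eh h j‖ + ‖(a ^ (-β)) • (eh h j - e j)‖ := by
        rw [hdecomp]; exact norm_add_le _ _
    _ = |b ^ (-β) - a ^ (-β)| + a ^ (-β) * ‖eh h j - e j‖ := by
        rw [norm_smul, norm_smul, heh1, Real.norm_eq_abs, Real.norm_eq_abs,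
          abs_of_pos (Real.rpow_pos_of_pos hap _), mul_one]
    _ ≤ β * C₁ * (h ^ r * a ^ (q - β - 1)) + Real.sqrt C₂ * (h ^ s * a ^ (q / 2 - β)) := by
        gcongr ?_ + ?_
        · rw [abs_sub_comm, abs_of_nonneg (by linarith)]
          linarith
        · rw [norm_sub_rev]
          calc a ^ (-β) * ‖e j - eh h j‖
              ≤ a ^ (-β) * (Real.sqrt C₂ * h ^ s * a ^ (q / 2)) :=
                mul_le_mul_of_nonneg_left hnorm2 (by positivity)
            _ = Real.sqrt C₂ * (h ^ s * a ^ (q / 2 - β)) := by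
                rw [show q / 2 - β = -β + q / 2 by ring, Real.rpow_add hap]
                ring
    _ ≤ max (β * C₁) (Real.sqrt C₂) * (h ^ r * a ^ (q - β - 1) + h ^ s * a ^ (q / 2 - β)) := by
        have t1 : (0:ℝ) ≤ h ^ r * a ^ (q - β - 1) := by positivity
        have t2 : (0:ℝ) ≤ h ^ s * a ^ (q / 2 - β) := by positivity
        have m1 : β * C₁ ≤ max (β * C₁) (Real.sqrt C₂) := le_max_left _ _
        have m2 : Real.sqrt C₂ ≤ max (β * C₁) (Real.sqrt C₂) := le_max_right _ _
        nlinarith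
end
end
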